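/- arXiv:math/0608716 — 4 statements merged into one kernel-verified Lean document; each statement's English description precedes it below -/
import Mathlib

section
/- Consider a star graph with k+1 edges with lengths ℓ_e > 0 and weights ρ_e > 0 (e ∈ {0,…,k}). For each e ∈ {0,…,k} let ψ_e = (ψ_{e,e'})_{e'=0}^k be a C¹ star function with real nonnegative values such that ∑_{e=0}^k ψ_{e,e'}(t) = 1 for every e' ∈ {0,…,k} and every t ∈ [0, ℓ_{e'}], and such that ψ_{e,e'}(ℓ_{e'}) = 1 if e' = e and ψ_{e,e'}(ℓ_{e'}) = 0 if e' ≠ e. Define the real (k+1)×(k+1) matrices Ā_{l,m} := ∑_{e'=0}^k ρ_{e'} ∫_0^{ℓ_{e'}} ψ_{l,e'}'(t)·ψ_{m,e'}'(t) dt and B̄_{l,m} := ∑_{e'=0}^k ρ_{e'} ∫_0^{ℓ_{e'}} ψ_{l,e'}(t)·ψ_{m,e'}(t) dt. Then Ā is positive semidefinite, B̄ is positive definite, and there exist constants ᾱ_A > 0 and ᾱ_B > 0 such that for every f ∈ ℂ^{k+1}: (1/ᾱ_A)·|f⌞1⃗|² ≤ ∑_{l,m} Ā_{l,m}·f_l·conj(f_m)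 ≤ ᾱ_A·|f⌞1⃗|², and (1/ᾱ_B)·|f|² ≤ ∑_{l,m} B̄_{l,m}·f_l·conj(f_m) ≤ ᾱ_B·|f|². -/
open MeasureTheory Set

/-- The component of `f ∈ ℂ^{k+1}` orthogonal to `1⃗ = (k+1)^{-1/2}(1,…,1)`:
`f⌞1⃗ = f − ⟨f,1⃗⟩·1⃗`, i.e. `(f⌞1⃗)_i = f_i − (∑_j f_j)/(k+1)`. -/
noncomputable def perpOne {m : ℕ} (f : Fin m → ℂ) : Fin m → ℂ :=
  fun i => f i - (∑ j, f j) / (m : ℂ)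

/-- The (real) value of the Hermitian quadratic form `∑_{l,m} M_{l,m}·f_l·conj(f_m)`
associated with a real matrix `M`. -/
noncomputable def quadFormC {m : ℕ} (M : Fin m → Fin m → ℝ) (f : Fin m → ℂ) : ℝ :=
  (∑ l, ∑ j, (M l j : ℂ) * f l * (starRingEnd ℂ) (f j)).re

section ZPAux

open intervalIntegral

set_option maxHeartbeats 1000000 in
private lemma zp_zeroOn {L : ℝ} (hL : 0 < L) {g : ℝ → ℝ} (hg : ContinuousOn g (Icc 0 L))
    (hnn : ∀ t ∈ Icc (0:ℝ) L, 0 ≤ g t) (hz : (∫ t in (0:ℝ)..L, g t) = 0) :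
    ∀ t ∈ Icc (0:ℝ) L, g t = 0 := by
  intro t ht
  by_contra hne
  have hgt : 0 < g t := lt_of_le_of_ne (hnn t ht) (Ne.symm hne)
  have hev : ∀ᶠ s in nhdsWithin t (Icc 0 L), g t / 2 < g s :=
    (hg t ht).eventually (eventually_gt_nhds (by linarith))
  rw [nhdsWithin, Filter.eventually_inf_principal] at hev
  rcases Metric.eventually_nhds_iff.1 hev with ⟨ε, hε, hball⟩
  set c : ℝ := max 0 (t - ε/2) with hc
  set d : ℝ := min L (t + ε/2) with hd
  have hcd : c < d := by
    rcases ht with ⟨ht0, htL⟩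
    apply max_lt <;> apply lt_min <;> linarith
  have hsub : Icc c d ⊆ Icc 0 L := Icc_subset_Icc (le_max_left _ _) (min_le_left _ _)
  have hgd : ∀ s ∈ Icc c d, g t / 2 ≤ g s := by
    intro s hs
    rcases hs with ⟨hsc, hsd⟩
    have h1 : t - ε/2 ≤ s := le_trans (le_max_right _ _) hsc
    have h2 : s ≤ t + ε/2 := le_trans hsd (min_le_right _ _)
    have hdist : dist s t < ε := by
      rw [Real.dist_eq, abs_sub_lt_iff]; constructor <;> linarith
    exact (hball hdist (hsub ⟨hsc, hsd⟩)).le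
  have h0c : (0:ℝ) ≤ c := le_max_left _ _
  have hdL : d ≤ L := min_le_left _ _
  have hint : ∀ a b : ℝ, 0 ≤ a → a ≤ b → b ≤ L → IntervalIntegrable g volume a b := by
    intro a b ha hab hbL
    apply ContinuousOn.intervalIntegrable
    rw [uIcc_of_le hab]
    exact hg.mono (Icc_subset_Icc ha hbL)
  have e1 : (∫ s in (0:ℝ)..c, g s) + (∫ s in c..L, g s) = ∫ s in (0:ℝ)..L, g s :=
    integral_add_adjacent_intervals (hint 0 c le_rfl h0c (by linarith))
      (hint c L h0c (by linarith) le_rfl)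
  have e2 : (∫ s in c..d, g s) + (∫ s in d..L, g s) = ∫ s in c..L, g s :=
    integral_add_adjacent_intervals (hint c d h0c hcd.le hdL)
      (hint d L (by linarith) hdL le_rfl)
  have n1 : 0 ≤ ∫ s in (0:ℝ)..c, g s :=
    integral_nonneg h0c fun u hu => hnn u ⟨hu.1, hu.2.trans (by linarith)⟩
  have n3 : 0 ≤ ∫ s in d..L, g s :=
    integral_nonneg hdL fun u hu => hnn u ⟨le_trans (by linarith) hu.1, hu.2⟩
  have nmid : g t / 2 * (d - c) ≤ ∫ s in c..d, g s := by
    have := integral_mono_on hcd.le (_root_.intervalIntegrable_const (c := g t / 2))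
      (hint c d h0c hcd.le hdL) hgd
    rw [intervalIntegral.integral_const] at this
    rw [smul_eq_mul] at this
    linarith
  have hmidpos : 0 < g t / 2 * (d - c) := by
    have : 0 < d - c := by linarith
    positivity
  nlinarith [hz, e1, e2]

set_option maxHeartbeats 1000000 in
private lemma zp_rep {n : ℕ} {L : ℝ} (hL : 0 ≤ L) (u : Fin n → ℝ → ℝ)
    (hu : ∀ l, ContinuousOn (u l) (Icc 0 L)) (x : Fin n → ℝ) :
    ∑ l, ∑ j, (∫ t in (0:ℝ)..L, u l t * u j t) * x l * x j
      = ∫ t in (0:ℝ)..L, (∑ l, x l * u l t)^2 := by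
  have hint : ∀ l j, IntervalIntegrable (fun t => u l t * u j t) volume 0 L := by
    intro l j
    apply ContinuousOn.intervalIntegrable
    rw [uIcc_of_le hL]
    exact (hu l).mul (hu j)
  have hint2 : ∀ l j, IntervalIntegrable (fun t => (x l * u l t) * (x j * u j t)) volume 0 L := by
    intro l j
    have : (fun t => (x l * u l t) * (x j * u j t))
        = fun t => (x l * x j) * (u l t * u j t) := by funext t; ring
    rw [this]
    exact (hint l j).const_mul _
  calc ∑ l, ∑ j, (∫ t in (0:ℝ)..L, u l t * u j t) * x l * x j
      = ∑ l, ∑ j, ∫ t in (0:ℝ)..L, (x l * u l t) * (x j * u j t) := by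
        refine Finset.sum_congr rfl fun l _ => Finset.sum_congr rfl fun j _ => ?_
        rw [show (fun t => (x l * u l t) * (x j * u j t))
            = fun t => (x l * x j) * (u l t * u j t) from by funext t; ring]
        rw [intervalIntegral.integral_const_mul]; ring
    _ = ∑ l, ∫ t in (0:ℝ)..L, ∑ j, (x l * u l t) * (x j * u j t) := by
        refine Finset.sum_congr rfl fun l _ => ?_
        rw [intervalIntegral.integral_finset_sum]
        intro j _; exact hint2 l j
    _ = ∫ t in (0:ℝ)..L, ∑ l, ∑ j, (x l * u l t) * (x j * u j t) := by
        rw [intervalIntegral.integral_finset_sum]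
        intro l _
        have h2 : (fun t => ∑ j, (x l * u l t) * (x j * u j t))
            = ∑ j, fun t => (x l * u l t) * (x j * u j t) := by funext t; simp
        rw [h2]
        exact IntervalIntegrable.sum Finset.univ (fun j _ => hint2 l j)
    _ = ∫ t in (0:ℝ)..L, (∑ l, x l * u l t)^2 := by
        refine intervalIntegral.integral_congr fun t _ => ?_
        rw [sq, Finset.sum_mul_sum]

/-- The real quadratic form on the star graph associated with coefficient functions `u`. -/
private noncomputable def zpQ {n m : ℕ} (L w : Fin m → ℝ) (u : Fin n → Fin m → ℝ → ℝ)
    (x : Fin n → ℝ) : ℝ :=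
  ∑ e, w e * ∫ t in (0:ℝ)..L e, (∑ l, x l * u l e t)^2

set_option maxHeartbeats 1000000 in
private lemma zp_quadRep {n m : ℕ} (L w : Fin m → ℝ) (hL : ∀ e, 0 ≤ L e)
    (u : Fin n → Fin m → ℝ → ℝ)
    (hu : ∀ l e, ContinuousOn (u l e) (Icc 0 (L e))) (x : Fin n → ℝ) :
    ∑ l, ∑ j, (∑ e, w e * ∫ t in (0:ℝ)..L e, u l e t * u j e t) * x l * x j
      = zpQ L w u x := by
  unfold zpQ
  calc ∑ l, ∑ j, (∑ e, w e * ∫ t in (0:ℝ)..L e, u l e t * u j e t) * x l * x j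
      = ∑ l, ∑ j, ∑ e, w e * ((∫ t in (0:ℝ)..L e, u l e t * u j e t) * x l * x j) := by
        refine Finset.sum_congr rfl fun l _ => Finset.sum_congr rfl fun j _ => ?_
        rw [Finset.sum_mul, Finset.sum_mul]
        refine Finset.sum_congr rfl fun e _ => by ring
    _ = ∑ l, ∑ e, ∑ j, w e * ((∫ t in (0:ℝ)..L e, u l e t * u j e t) * x l * x j) :=
        Finset.sum_congr rfl fun l _ => Finset.sum_comm
    _ = ∑ e, ∑ l, ∑ j, w e * ((∫ t in (0:ℝ)..L e, u l e t * u j e t) * x l * x j) :=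
        Finset.sum_comm
    _ = ∑ e, w e * ∑ l, ∑ j, (∫ t in (0:ℝ)..L e, u l e t * u j e t) * x l * x j := by
        refine Finset.sum_congr rfl fun e _ => ?_
        rw [Finset.mul_sum]
        refine Finset.sum_congr rfl fun l _ => (Finset.mul_sum _ _ _).symm
    _ = ∑ e, w e * ∫ t in (0:ℝ)..L e, (∑ l, x l * u l e t)^2 := by
        refine Finset.sum_congr rfl fun e _ => ?_
        rw [zp_rep (hL e) (fun l => u l e) (fun l => hu l e) x]

private lemma zp_smul {n m : ℕ} (L w : Fin m → ℝ) (u : Fin n → Fin m → ℝ → ℝ)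
    (x : Fin n → ℝ) (r : ℝ) :
    zpQ L w u (fun l => r * x l) = r^2 * zpQ L w u x := by
  unfold zpQ
  rw [Finset.mul_sum]
  refine Finset.sum_congr rfl fun e _ => ?_
  rw [show (fun t => (∑ l, (r * x l) * u l e t)^2)
      = fun t => r^2 * (∑ l, x l * u l e t)^2 from by
    funext t
    rw [show ∑ l, (r * x l) * u l e t = r * ∑ l, x l * u l e t from by
      rw [Finset.mul_sum]; exact Finset.sum_congr rfl fun l _ => by ring]
    ring]
  rw [intervalIntegral.integral_const_mul]
  ring

private lemma zp_Q_nonneg {n m : ℕ} (L w : Fin m → ℝ) (hL : ∀ e, 0 ≤ L e) (hw : ∀ e, 0 ≤ w e)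
    (u : Fin n → Fin m → ℝ → ℝ) (x : Fin n → ℝ) :
    0 ≤ zpQ L w u x :=
  Finset.sum_nonneg fun e _ => mul_nonneg (hw e)
    (intervalIntegral.integral_nonneg (hL e) fun t _ => sq_nonneg _)

private lemma zp_shift {n m : ℕ} (L w : Fin m → ℝ) (hL : ∀ e, 0 ≤ L e)
    (u : Fin n → Fin m → ℝ → ℝ)
    (hsum : ∀ e, ∀ t ∈ Icc (0:ℝ) (L e), ∑ l, u l e t = 0)
    (x : Fin n → ℝ) (c : ℝ) :
    zpQ L w u (fun l => x l + c) = zpQ L w u x := by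
  unfold zpQ
  refine Finset.sum_congr rfl fun e _ => ?_
  congr 1
  refine intervalIntegral.integral_congr fun t ht => ?_
  rw [uIcc_of_le (hL e)] at ht
  have h1 : ∑ l, (x l + c) * u l e t = (∑ l, x l * u l e t) + c * ∑ l, u l e t := by
    rw [Finset.mul_sum, ← Finset.sum_add_distrib]
    exact Finset.sum_congr rfl fun l _ => by ring
  rw [h1, hsum e t ht, mul_zero, add_zero]

private lemma zp_Q_eq_zero {n m : ℕ} (L w : Fin m → ℝ) (hL : ∀ e, 0 < L e) (hw : ∀ e, 0 < w e)
    (u : Fin n → Fin m → ℝ → ℝ) (hu : ∀ l e, ContinuousOn (u l e) (Icc 0 (L e)))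
    (x : Fin n → ℝ) (h : zpQ L w u x = 0) :
    ∀ e, ∀ t ∈ Icc (0:ℝ) (L e), ∑ l, x l * u l e t = 0 := by
  intro e t ht
  have hterm := (Finset.sum_eq_zero_iff_of_nonneg (fun e _ => mul_nonneg (hw e).le
    (intervalIntegral.integral_nonneg (hL e).le fun t _ => sq_nonneg _))).1 h e (Finset.mem_univ e)
  have hint0 : (∫ t in (0:ℝ)..L e, (∑ l, x l * u l e t)^2) = 0 := by
    rcases mul_eq_zero.1 hterm with h1 | h1
    · exact absurd h1 (hw e).ne'
    · exact h1
  have hcont : ContinuousOn (fun t => (∑ l, x l * u l e t)^2) (Icc 0 (L e)) := by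
    apply ContinuousOn.pow
    exact continuousOn_finset_sum _ fun l _ => continuousOn_const.mul (hu l e)
  have := zp_zeroOn (hL e) hcont (fun t _ => sq_nonneg _) hint0 t ht
  exact sq_eq_zero_iff.mp this

private lemma zp_quadFormC_eq {m : ℕ} (M : Fin m → Fin m → ℝ) (f : Fin m → ℂ) :
    quadFormC M f
      = (∑ l, ∑ j, M l j * (f l).re * (f j).re)
      + (∑ l, ∑ j, M l j * (f l).im * (f j).im) := by
  unfold quadFormC
  rw [Complex.re_sum, ← Finset.sum_add_distrib]
  refine Finset.sum_congr rfl fun l _ => ?_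
  rw [Complex.re_sum, ← Finset.sum_add_distrib]
  refine Finset.sum_congr rfl fun j _ => ?_
  simp [Complex.mul_re, Complex.mul_im, Complex.conj_re, Complex.conj_im]

private lemma zp_minmax {X : Type*} [TopologicalSpace X] (T : Set X) (hT : IsCompact T)
    (hne : T.Nonempty) (Q : X → ℝ) (hQ : Continuous Q) (hpos : ∀ f ∈ T, 0 < Q f) :
    ∃ α : ℝ, 0 < α ∧ ∀ f ∈ T, 1/α ≤ Q f ∧ Q f ≤ α := by
  obtain ⟨a, haT, ha⟩ := hT.exists_isMinOn hne hQ.continuousOn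
  obtain ⟨b, hbT, hb⟩ := hT.exists_isMaxOn hne hQ.continuousOn
  have hQa : 0 < Q a := hpos a haT
  refine ⟨max (Q b) (1/(Q a)), lt_max_of_lt_right (by positivity), fun f hf => ?_⟩
  constructor
  · have h1 : 1 / max (Q b) (1/(Q a)) ≤ 1/(1/(Q a)) :=
      one_div_le_one_div_of_le (by positivity) (le_max_right _ _)
    rw [one_div_one_div] at h1
    exact h1.trans (isMinOn_iff.1 ha f hf)
  · exact (isMaxOn_iff.1 hb f hf).trans (le_max_left _ _)

private lemma zp_hasDeriv {n : ℕ} {L : ℝ} (v : Fin n → ℝ → ℝ)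
    (hv : ∀ l, ContDiffOn ℝ 1 (v l) (Icc 0 L)) (x : Fin n → ℝ) {t : ℝ} (ht : t ∈ Icc (0:ℝ) L) :
    HasDerivWithinAt (fun s => ∑ l, x l * v l s)
      (∑ l, x l * derivWithin (v l) (Icc 0 L) t) (Icc 0 L) t := by
  apply HasDerivWithinAt.fun_sum
  intro l _
  exact (((hv l).differentiableOn one_ne_zero t ht).hasDerivWithinAt).const_mul (x l)

private lemma zp_sumD {n : ℕ} {L : ℝ} (hL : 0 < L) (v : Fin n → ℝ → ℝ)
    (hv : ∀ l, ContDiffOn ℝ 1 (v l) (Icc 0 L))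
    (hsum : ∀ t ∈ Icc (0:ℝ) L, ∑ l, v l t = 1) :
    ∀ t ∈ Icc (0:ℝ) L, ∑ l, derivWithin (v l) (Icc 0 L) t = 0 := by
  intro t ht
  have hu : UniqueDiffWithinAt ℝ (Icc (0:ℝ) L) t := uniqueDiffOn_Icc hL t ht
  have h1 : HasDerivWithinAt (fun s => ∑ l, (1:ℝ) * v l s)
      (∑ l, (1:ℝ) * derivWithin (v l) (Icc 0 L) t) (Icc 0 L) t := zp_hasDeriv v hv _ ht
  simp only [one_mul] at h1
  have h2 : HasDerivWithinAt (fun s : ℝ => ∑ l, v l s) 0 (Icc 0 L) t :=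
    (hasDerivWithinAt_const t _ 1).congr (fun s hs => hsum s hs) (hsum t ht)
  exact UniqueDiffWithinAt.eq_deriv _ hu h1 h2

private lemma zp_const {n : ℕ} {L : ℝ} (hL : 0 < L) (v : Fin n → ℝ → ℝ)
    (hv : ∀ l, ContDiffOn ℝ 1 (v l) (Icc 0 L)) (x : Fin n → ℝ)
    (hz : ∀ t ∈ Icc (0:ℝ) L, ∑ l, x l * derivWithin (v l) (Icc 0 L) t = 0) :
    ∑ l, x l * v l L = ∑ l, x l * v l 0 := by
  have hdiff : DifferentiableOn ℝ (fun s => ∑ l, x l * v l s) (Icc 0 L) := by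
    intro t ht
    exact (zp_hasDeriv v hv x ht).differentiableWithinAt
  have hder : ∀ t ∈ Ico (0:ℝ) L, derivWithin (fun s => ∑ l, x l * v l s) (Icc 0 L) t = 0 := by
    intro t ht
    have ht' : t ∈ Icc (0:ℝ) L := Ico_subset_Icc_self ht
    rw [(zp_hasDeriv v hv x ht').derivWithin (uniqueDiffOn_Icc hL t ht')]
    exact hz t ht'
  have := constant_of_derivWithin_zero hdiff hder L ⟨hL.le, le_rfl⟩
  simpa using this

private lemma zp_entry {L : ℝ} (hL : 0 < L) (p q : ℝ → ℝ) :
    (∫ t in (0:ℝ)..L, deriv p t * deriv q t)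
      = ∫ t in (0:ℝ)..L, derivWithin p (Icc 0 L) t * derivWithin q (Icc 0 L) t := by
  apply intervalIntegral.integral_congr_ae
  have h1 : ∀ᵐ t : ℝ, t ≠ L := by
    rw [MeasureTheory.ae_iff]
    have : {t : ℝ | ¬ t ≠ L} = {L} := by ext t; simp
    rw [this]
    exact Real.volume_singleton
  filter_upwards [h1] with t ht hmem
  rw [uIoc_of_le hL.le] at hmem
  have hoo : t ∈ Ioo (0:ℝ) L := ⟨hmem.1, lt_of_le_of_ne hmem.2 ht⟩
  have hnb : Icc (0:ℝ) L ∈ nhds t := Icc_mem_nhds hoo.1 hoo.2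
  rw [derivWithin_of_mem_nhds hnb, derivWithin_of_mem_nhds hnb]

private lemma zp_cont {m : ℕ} (M : Fin m → Fin m → ℝ) :
    Continuous fun f : EuclideanSpace ℂ (Fin m) => quadFormC M f := by
  unfold quadFormC
  refine Complex.continuous_re.comp ?_
  refine continuous_finset_sum _ fun l _ => continuous_finset_sum _ fun j _ => ?_
  exact (continuous_const.mul ((EuclideanSpace.proj l).continuous)).mul
    (Complex.continuous_conj.comp (EuclideanSpace.proj j).continuous)

private lemma zp_normsq {m : ℕ} (g : EuclideanSpace ℂ (Fin m)) :
    ‖g‖^2 = ∑ i, ‖g i‖^2 := by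
  rw [EuclideanSpace.norm_eq, Real.sq_sqrt]
  positivity

end ZPAux
set_option maxHeartbeats 3000000 in
/-- (Lemma 3.1, one-dimensional part.) For a partition of unity `(ψ_e)` on a
weighted star graph adapted to the edge endpoints, the stiffness matrix
`Ā_{l,m} = ∑_{e'} ρ_{e'} ∫ ψ_{l,e'}'·ψ_{m,e'}'` is positive semidefinite with quadratic form
equivalent to `|f⌞1⃗|²`, and the mass matrix `B̄_{l,m} = ∑_{e'} ρ_{e'} ∫ ψ_{l,e'}·ψ_{m,e'}`
is positive definite with quadratic form equivalent to `|f|²`. -/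
theorem stmt9 (k : ℕ) (hk : 1 ≤ k)
    (ℓ ρ : Fin (k + 1) → ℝ) (hℓ : ∀ e, 0 < ℓ e) (hρ : ∀ e, 0 < ρ e)
    (ψ : Fin (k + 1) → Fin (k + 1) → ℝ → ℝ)
    (hψ_C1 : ∀ e e', ContDiffOn ℝ 1 (ψ e e') (Icc 0 (ℓ e')))
    (hψ_vertex : ∀ e e₁ e₂, ψ e e₁ 0 = ψ e e₂ 0)
    (hψ_nonneg : ∀ e e', ∀ t ∈ Icc (0 : ℝ) (ℓ e'), 0 ≤ ψ e e' t)
    (hψ_sum : ∀ e', ∀ t ∈ Icc (0 : ℝ) (ℓ e'), ∑ e, ψ e e' t = 1)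
    (hψ_end : ∀ e e', ψ e e' (ℓ e') = if e' = e then 1 else 0) :
    (Matrix.PosSemidef (Matrix.of fun l m : Fin (k + 1) =>
        ∑ e', ρ e' * ∫ t in (0 : ℝ)..(ℓ e'), deriv (ψ l e') t * deriv (ψ m e') t)) ∧
    (Matrix.PosDef (Matrix.of fun l m : Fin (k + 1) =>
        ∑ e', ρ e' * ∫ t in (0 : ℝ)..(ℓ e'), ψ l e' t * ψ m e' t)) ∧
    (∃ αA : ℝ, 0 < αA ∧ ∀ f : Fin (k + 1) → ℂ,
      (1 / αA) * (∑ i, ‖perpOne f i‖ ^ 2) ≤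
          quadFormC (fun l m =>
            ∑ e', ρ e' * ∫ t in (0 : ℝ)..(ℓ e'), deriv (ψ l e') t * deriv (ψ m e') t) f ∧
        quadFormC (fun l m =>
            ∑ e', ρ e' * ∫ t in (0 : ℝ)..(ℓ e'), deriv (ψ l e') t * deriv (ψ m e') t) f ≤
          αA * (∑ i, ‖perpOne f i‖ ^ 2)) ∧
    (∃ αB : ℝ, 0 < αB ∧ ∀ f : Fin (k + 1) → ℂ,
      (1 / αB) * (∑ i, ‖f i‖ ^ 2) ≤
          quadFormC (fun l m =>
            ∑ e', ρ e' * ∫ t in (0 : ℝ)..(ℓ e'), ψ l e' t * ψ m e' t) f ∧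
        quadFormC (fun l m =>
            ∑ e', ρ e' * ∫ t in (0 : ℝ)..(ℓ e'), ψ l e' t * ψ m e' t) f ≤
          αB * (∑ i, ‖f i‖ ^ 2)) := by
  -- abbreviations
  set D : Fin (k+1) → Fin (k+1) → ℝ → ℝ :=
    fun l e => derivWithin (ψ l e) (Icc 0 (ℓ e)) with hDdef
  have hDcont : ∀ l e, ContinuousOn (D l e) (Icc 0 (ℓ e)) := fun l e =>
    (hψ_C1 l e).continuousOn_derivWithin (uniqueDiffOn_Icc (hℓ e)) le_rfl
  have hψcont : ∀ l e, ContinuousOn (ψ l e) (Icc 0 (ℓ e)) := fun l e => (hψ_C1 l e).continuousOn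
  set MA : Fin (k+1) → Fin (k+1) → ℝ :=
    fun l m => ∑ e', ρ e' * ∫ t in (0:ℝ)..(ℓ e'), deriv (ψ l e') t * deriv (ψ m e') t with hMAdef
  set MB : Fin (k+1) → Fin (k+1) → ℝ :=
    fun l m => ∑ e', ρ e' * ∫ t in (0:ℝ)..(ℓ e'), ψ l e' t * ψ m e' t with hMBdef
  have hℓ' : ∀ e, (0:ℝ) ≤ ℓ e := fun e => (hℓ e).le
  -- matrix entries in derivWithin form
  have hMAD : ∀ l j : Fin (k+1),
      MA l j = ∑ e, ρ e * ∫ t in (0:ℝ)..(ℓ e), D l e t * D j e t := by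
    intro l j
    have h0 : MA l j = ∑ e, ρ e * ∫ t in (0:ℝ)..(ℓ e), deriv (ψ l e) t * deriv (ψ j e) t := by
      rw [hMAdef]
    rw [h0]
    refine Finset.sum_congr rfl fun e _ => ?_
    rw [zp_entry (hℓ e) (ψ l e) (ψ j e)]
  -- quadratic representations
  have hrepA : ∀ x : Fin (k+1) → ℝ,
      (∑ l, ∑ j, MA l j * x l * x j) = zpQ ℓ ρ D x := by
    intro x
    calc ∑ l, ∑ j, MA l j * x l * x j
        = ∑ l, ∑ j, (∑ e, ρ e * ∫ t in (0:ℝ)..(ℓ e), D l e t * D j e t) * x l * x j := by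
          refine Finset.sum_congr rfl fun l _ => Finset.sum_congr rfl fun j _ => ?_
          rw [hMAD l j]
      _ = zpQ ℓ ρ D x := zp_quadRep ℓ ρ hℓ' D hDcont x
  have hrepB : ∀ x : Fin (k+1) → ℝ,
      (∑ l, ∑ j, MB l j * x l * x j) = zpQ ℓ ρ ψ x := by
    intro x
    calc ∑ l, ∑ j, MB l j * x l * x j
        = ∑ l, ∑ j, (∑ e, ρ e * ∫ t in (0:ℝ)..(ℓ e), ψ l e t * ψ j e t) * x l * x j := by
          refine Finset.sum_congr rfl fun l _ => Finset.sum_congr rfl fun j _ => ?_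
          rw [hMBdef]
      _ = zpQ ℓ ρ ψ x := zp_quadRep ℓ ρ hℓ' ψ hψcont x
  -- complex decomposition
  have hCA : ∀ f : Fin (k+1) → ℂ, quadFormC MA f
      = zpQ ℓ ρ D (fun l => (f l).re) + zpQ ℓ ρ D (fun l => (f l).im) := by
    intro f
    rw [zp_quadFormC_eq MA f]
    have h1 : (∑ l, ∑ j, MA l j * (f l).re * (f j).re) = zpQ ℓ ρ D (fun l => (f l).re) :=
      hrepA (fun l => (f l).re)
    have h2 : (∑ l, ∑ j, MA l j * (f l).im * (f j).im) = zpQ ℓ ρ D (fun l => (f l).im) :=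
      hrepA (fun l => (f l).im)
    rw [h1, h2]
  have hCB : ∀ f : Fin (k+1) → ℂ, quadFormC MB f
      = zpQ ℓ ρ ψ (fun l => (f l).re) + zpQ ℓ ρ ψ (fun l => (f l).im) := by
    intro f
    rw [zp_quadFormC_eq MB f]
    have h1 : (∑ l, ∑ j, MB l j * (f l).re * (f j).re) = zpQ ℓ ρ ψ (fun l => (f l).re) :=
      hrepB (fun l => (f l).re)
    have h2 : (∑ l, ∑ j, MB l j * (f l).im * (f j).im) = zpQ ℓ ρ ψ (fun l => (f l).im) :=
      hrepB (fun l => (f l).im)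
    rw [h1, h2]
  -- sum of derivatives vanishes
  have hsumD : ∀ e, ∀ t ∈ Icc (0:ℝ) (ℓ e), ∑ l, D l e t = 0 := by
    intro e t ht
    exact zp_sumD (hℓ e) (fun l => ψ l e) (fun l => hψ_C1 l e) (hψ_sum e) t ht
  -- endpoint values
  have hval : ∀ (x : Fin (k+1) → ℝ) (e : Fin (k+1)), ∑ l, x l * ψ l e (ℓ e) = x e := by
    intro x e
    simp only [hψ_end]
    simp [Finset.sum_ite_eq]
  -- kernels
  have hendB : ∀ (x : Fin (k+1) → ℝ), zpQ ℓ ρ ψ x = 0 → ∀ e, x e = 0 := by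
    intro x hx e
    have hz := zp_Q_eq_zero ℓ ρ hℓ hρ ψ hψcont x hx e (ℓ e) ⟨(hℓ e).le, le_rfl⟩
    rwa [hval x e] at hz
  have hendA : ∀ (x : Fin (k+1) → ℝ), zpQ ℓ ρ D x = 0 →
      ∀ e, x e = ∑ l, x l * ψ l 0 0 := by
    intro x hx e
    have hz := zp_Q_eq_zero ℓ ρ hℓ hρ D hDcont x hx e
    have hc : ∑ l, x l * ψ l e (ℓ e) = ∑ l, x l * ψ l e 0 :=
      zp_const (hℓ e) (fun l => ψ l e) (fun l => hψ_C1 l e) x hz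
    rw [hval x e] at hc
    rw [hc]
    exact Finset.sum_congr rfl fun l _ => by rw [hψ_vertex l e 0]
  -- dot product identity
  have hdot : ∀ (N : Fin (k+1) → Fin (k+1) → ℝ) (x : Fin (k+1) → ℝ),
      dotProduct (star x) (Matrix.mulVec (Matrix.of N) x) = ∑ l, ∑ j, N l j * x l * x j := by
    intro N x
    rw [star_trivial]
    simp only [dotProduct, Matrix.mulVec, Matrix.of_apply]
    refine Finset.sum_congr rfl fun l _ => ?_
    rw [Finset.mul_sum]
    refine Finset.sum_congr rfl fun j _ => by ring
  -- symmetry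
  have hsymA : ∀ i j, MA i j = MA j i := by
    intro i j
    rw [hMAdef]
    refine Finset.sum_congr rfl fun e _ => ?_
    congr 1
    exact intervalIntegral.integral_congr fun t _ => mul_comm _ _
  have hsymB : ∀ i j, MB i j = MB j i := by
    intro i j
    rw [hMBdef]
    refine Finset.sum_congr rfl fun e _ => ?_
    congr 1
    exact intervalIntegral.integral_congr fun t _ => mul_comm _ _
  have hQAnn : ∀ x, 0 ≤ zpQ ℓ ρ D x :=
    fun x => zp_Q_nonneg ℓ ρ hℓ' (fun e => (hρ e).le) D x
  have hQBnn : ∀ x, 0 ≤ zpQ ℓ ρ ψ x :=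
    fun x => zp_Q_nonneg ℓ ρ hℓ' (fun e => (hρ e).le) ψ x
  refine ⟨Matrix.posSemidef_iff_dotProduct_mulVec.2 ⟨?_, ?_⟩,
    Matrix.posDef_iff_dotProduct_mulVec.2 ⟨?_, ?_⟩, ?_, ?_⟩
  · -- A Hermitian
    ext i j
    simp only [Matrix.conjTranspose_apply, Matrix.of_apply, star_trivial]
    exact hsymA j i
  · -- A posSemidef
    intro x
    rw [hdot MA x, hrepA x]
    exact hQAnn x
  · -- B Hermitian
    ext i j
    simp only [Matrix.conjTranspose_apply, Matrix.of_apply, star_trivial]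
    exact hsymB j i
  · -- B posdef
    intro x hx0
    rw [hdot MB x, hrepB x]
    refine (hQBnn x).lt_of_ne fun heq => hx0 ?_
    funext e
    exact hendB x heq.symm e
  · -- αA
    have hkne : ((k+1 : ℕ) : ℂ) ≠ 0 := Nat.cast_ne_zero.2 (Nat.succ_ne_zero k)
    have hknR : ((k+1 : ℕ) : ℝ) ≠ 0 := Nat.cast_ne_zero.2 (Nat.succ_ne_zero k)
    have hsumf : ∀ f : Fin (k+1) → ℂ, ∑ j, perpOne f j = 0 := by
      intro f
      simp only [perpOne]
      rw [Finset.sum_sub_distrib, Finset.sum_const, Finset.card_univ, Fintype.card_fin,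
        nsmul_eq_mul, mul_div_cancel₀ _ hkne, sub_self]
    have hQfg : ∀ f : Fin (k+1) → ℂ, quadFormC MA (perpOne f) = quadFormC MA f := by
      intro f
      rw [hCA (perpOne f), hCA f]
      have a1 : (fun l => (perpOne f l).re)
          = fun l => (f l).re + (-((((∑ j, f j) / ((k+1 : ℕ) : ℂ))).re)) := by
        funext l
        show (f l - (∑ j, f j) / ((k+1 : ℕ) : ℂ)).re = _
        rw [Complex.sub_re]; ring
      have a2 : (fun l => (perpOne f l).im)
          = fun l => (f l).im + (-((((∑ j, f j) / ((k+1 : ℕ) : ℂ))).im)) := by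
        funext l
        show (f l - (∑ j, f j) / ((k+1 : ℕ) : ℂ)).im = _
        rw [Complex.sub_im]; ring
      rw [a1, a2]
      have s1 : zpQ ℓ ρ D (fun l => (f l).re + (-((((∑ j, f j) / ((k+1 : ℕ) : ℂ))).re)))
          = zpQ ℓ ρ D (fun l => (f l).re) := zp_shift ℓ ρ hℓ' D hsumD _ _
      have s2 : zpQ ℓ ρ D (fun l => (f l).im + (-((((∑ j, f j) / ((k+1 : ℕ) : ℂ))).im)))
          = zpQ ℓ ρ D (fun l => (f l).im) := zp_shift ℓ ρ hℓ' D hsumD _ _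
      rw [s1, s2]
    set TA : Set (EuclideanSpace ℂ (Fin (k+1))) :=
      Metric.sphere 0 1 ∩ {h | ∑ j, h j = 0} with hTAdef
    have hTAc : IsCompact TA := (isCompact_sphere _ _).inter_right
      (isClosed_eq (continuous_finset_sum _ fun j _ => (EuclideanSpace.proj j).continuous)
        continuous_const)
    have hTAne : TA.Nonempty := by
      have hi1 : (1 : ℕ) < k + 1 := by omega
      set i1 : Fin (k+1) := ⟨1, hi1⟩ with hi1def
      have hne01 : (0 : Fin (k+1)) ≠ i1 := by
        intro h
        have := congrArg Fin.val h
        simp [hi1def] at this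
      set f0 : EuclideanSpace ℂ (Fin (k+1)) :=
        WithLp.toLp 2 (fun j => (if j = 0 then (1:ℂ) else 0) - (if j = i1 then 1 else 0)) with hf0def
      have hf0sum : ∑ j, f0 j = 0 := by
        simp only [hf0def, PiLp.toLp_apply]
        rw [Finset.sum_sub_distrib]
        simp [Finset.sum_ite_eq']
      have hf0ne : f0 ≠ 0 := by
        intro h0
        have h1 := congrArg (fun g : EuclideanSpace ℂ (Fin (k+1)) => g 0) h0
        rw [hf0def] at h1
        simp [hne01] at h1
      refine ⟨(‖f0‖⁻¹ : ℝ) • f0, ?_, ?_⟩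
      · rw [mem_sphere_zero_iff_norm]
        exact norm_smul_inv_norm (𝕜 := ℝ) hf0ne
      · show ∑ j, ((‖f0‖⁻¹ : ℝ) • f0) j = 0
        have : ∀ j, ((‖f0‖⁻¹ : ℝ) • f0) j = (‖f0‖⁻¹ : ℝ) • f0 j := fun j => rfl
        calc ∑ j, ((‖f0‖⁻¹ : ℝ) • f0) j = ∑ j, (‖f0‖⁻¹ : ℝ) • f0 j :=
              Finset.sum_congr rfl fun j _ => this j
          _ = (‖f0‖⁻¹ : ℝ) • ∑ j, f0 j := (Finset.smul_sum).symm
          _ = 0 := by rw [hf0sum, smul_zero]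
    have hposA : ∀ h ∈ TA, 0 < quadFormC MA h := by
      intro h hh
      have h0 : 0 ≤ quadFormC MA h := by
        rw [hCA h]; exact add_nonneg (hQAnn _) (hQAnn _)
      refine h0.lt_of_ne fun heq => ?_
      have hsum0 : zpQ ℓ ρ D (fun l => (h l).re) + zpQ ℓ ρ D (fun l => (h l).im) = 0 := by
        rw [← hCA h, ← heq]
      obtain ⟨hre0, him0⟩ := (add_eq_zero_iff_of_nonneg (hQAnn _) (hQAnn _)).1 hsum0
      have hhs : ∑ j, h j = 0 := hh.2
      -- the common values
      have hcre : ∀ e, (h e).re = ∑ l, (h l).re * ψ l 0 0 := hendA _ hre0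
      have hcim : ∀ e, (h e).im = ∑ l, (h l).im * ψ l 0 0 := hendA _ him0
      have hsre : ∑ j, (h j).re = 0 := by
        rw [← Complex.re_sum, hhs, Complex.zero_re]
      have hsim : ∑ j, (h j).im = 0 := by
        rw [← Complex.im_sum, hhs, Complex.zero_im]
      have hre_c : ∑ j, (h j).re = ((k+1 : ℕ) : ℝ) * ∑ l, (h l).re * ψ l 0 0 := by
        calc ∑ j, (h j).re = ∑ _j : Fin (k+1), ∑ l, (h l).re * ψ l 0 0 :=
              Finset.sum_congr rfl fun j _ => hcre j
          _ = ((k+1 : ℕ) : ℝ) * ∑ l, (h l).re * ψ l 0 0 := by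
              rw [Finset.sum_const, Finset.card_univ, Fintype.card_fin, nsmul_eq_mul]
      have him_c : ∑ j, (h j).im = ((k+1 : ℕ) : ℝ) * ∑ l, (h l).im * ψ l 0 0 := by
        calc ∑ j, (h j).im = ∑ _j : Fin (k+1), ∑ l, (h l).im * ψ l 0 0 :=
              Finset.sum_congr rfl fun j _ => hcim j
          _ = ((k+1 : ℕ) : ℝ) * ∑ l, (h l).im * ψ l 0 0 := by
              rw [Finset.sum_const, Finset.card_univ, Fintype.card_fin, nsmul_eq_mul]
      have hcre0 : ∑ l, (h l).re * ψ l 0 0 = 0 := by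
        rcases mul_eq_zero.1 (hre_c ▸ hsre) with h' | h'
        · exact absurd h' hknR
        · exact h'
      have hcim0 : ∑ l, (h l).im * ψ l 0 0 = 0 := by
        rcases mul_eq_zero.1 (him_c ▸ hsim) with h' | h'
        · exact absurd h' hknR
        · exact h'
      have hn : ‖h‖ = 1 := by
        have := hh.1
        rwa [mem_sphere_zero_iff_norm] at this
      have hone : (1:ℝ) = ∑ i, ‖h i‖^2 := by rw [← zp_normsq h, hn]; norm_num
      have hzero : ∑ i, ‖h i‖^2 = 0 := Finset.sum_eq_zero fun i _ => by
        rw [show h i = 0 from Complex.ext (by rw [hcre i, hcre0]; simp) (by rw [hcim i, hcim0]; simp)]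
        simp
      linarith
    obtain ⟨α, hα, hb⟩ := zp_minmax TA hTAc hTAne (fun h => quadFormC MA h) (zp_cont MA) hposA
    refine ⟨α, hα, fun f => ?_⟩
    have hQperp : quadFormC MA (perpOne f) = quadFormC MA f := hQfg f
    have hsumg : ∑ j, perpOne f j = 0 := hsumf f
    by_cases hg : perpOne f = fun _ => (0:ℂ)
    · have h1 : quadFormC MA f = 0 := by rw [← hQperp, hg]; simp [quadFormC]
      have h2 : (∑ i, ‖perpOne f i‖^2) = 0 := by rw [hg]; simp
      rw [h1, h2, mul_zero, mul_zero]; exact ⟨le_rfl, le_rfl⟩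
    · set gE : EuclideanSpace ℂ (Fin (k+1)) := WithLp.toLp 2 (perpOne f)
        with hgEdef
      have hgne : gE ≠ 0 := fun h0 => hg (funext fun i => congrArg (fun g : EuclideanSpace ℂ (Fin (k+1)) => g i) h0)
      set r : ℝ := ‖gE‖ with hrdef
      have hr : 0 < r := norm_pos_iff.2 hgne
      set u0 : EuclideanSpace ℂ (Fin (k+1)) := (r⁻¹ : ℝ) • gE with hu0def
      have hu0T : u0 ∈ TA := by
        rw [hTAdef]
        refine ⟨?_, ?_⟩
        · rw [mem_sphere_zero_iff_norm, hu0def, hrdef]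
          exact norm_smul_inv_norm (𝕜 := ℝ) hgne
        · show ∑ j, u0 j = 0
          have hap : ∀ j, u0 j = (r⁻¹ : ℝ) • gE j := fun j => by rw [hu0def]; rfl
          calc ∑ j, u0 j = ∑ j, (r⁻¹ : ℝ) • gE j := Finset.sum_congr rfl fun j _ => hap j
            _ = (r⁻¹ : ℝ) • ∑ j, gE j := (Finset.smul_sum).symm
            _ = 0 := by rw [hsumg, smul_zero]
      have hfu : ∀ j, gE j = (r:ℂ) * u0 j := by
        intro j
        have h5 : u0 j = (r⁻¹:ℝ) • gE j := by rw [hu0def]; rfl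
        rw [h5, Complex.real_smul, Complex.ofReal_inv, ← mul_assoc,
          mul_inv_cancel₀ (Complex.ofReal_ne_zero.2 hr.ne'), one_mul]
      have hscal : quadFormC MA gE = r^2 * quadFormC MA u0 := by
        rw [hCA gE, hCA u0]
        have a1 : (fun l => (gE l).re) = fun l => r * (u0 l).re :=
          funext fun l => by rw [hfu l, Complex.re_ofReal_mul]
        have a2 : (fun l => (gE l).im) = fun l => r * (u0 l).im :=
          funext fun l => by rw [hfu l, Complex.im_ofReal_mul]
        rw [a1, a2]
        have b1 : zpQ ℓ ρ D (fun l => r * (u0 l).re) = r^2 * zpQ ℓ ρ D (fun l => (u0 l).re) :=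
          zp_smul ℓ ρ D _ r
        have b2 : zpQ ℓ ρ D (fun l => r * (u0 l).im) = r^2 * zpQ ℓ ρ D (fun l => (u0 l).im) :=
          zp_smul ℓ ρ D _ r
        rw [b1, b2]; ring
      have hnf : (∑ i, ‖gE i‖^2) = r^2 := by rw [hrdef]; exact (zp_normsq _).symm
      obtain ⟨hb1, hb2⟩ := hb u0 hu0T
      constructor
      · show 1/α * (∑ i, ‖gE i‖^2) ≤ quadFormC MA f
        rw [hnf, ← hQperp, show perpOne f = ⇑gE from rfl, hscal]; nlinarith [sq_nonneg r]
      · show quadFormC MA f ≤ α * (∑ i, ‖gE i‖^2)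
        rw [hnf, ← hQperp, show perpOne f = ⇑gE from rfl, hscal]; nlinarith [sq_nonneg r]
  · -- αB
    set TB : Set (EuclideanSpace ℂ (Fin (k+1))) := Metric.sphere 0 1 with hTBdef
    have hTBc : IsCompact TB := isCompact_sphere _ _
    have hTBne : TB.Nonempty := by
      refine ⟨EuclideanSpace.single 0 (1:ℂ), ?_⟩
      rw [hTBdef, mem_sphere_zero_iff_norm, EuclideanSpace.norm_single, norm_one]
    have hposB : ∀ h ∈ TB, 0 < quadFormC MB h := by
      intro h hh
      have h0 : 0 ≤ quadFormC MB h := by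
        rw [hCB h]; exact add_nonneg (hQBnn _) (hQBnn _)
      refine h0.lt_of_ne fun heq => ?_
      have hsum0 : zpQ ℓ ρ ψ (fun l => (h l).re) + zpQ ℓ ρ ψ (fun l => (h l).im) = 0 := by
        rw [← hCB h, ← heq]
      obtain ⟨hre0, him0⟩ := (add_eq_zero_iff_of_nonneg (hQBnn _) (hQBnn _)).1 hsum0
      have hn : ‖h‖ = 1 := by rw [hTBdef] at hh; rwa [mem_sphere_zero_iff_norm] at hh
      have hone : (1:ℝ) = ∑ i, ‖h i‖^2 := by rw [← zp_normsq h, hn]; norm_num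
      have hzero : ∑ i, ‖h i‖^2 = 0 := Finset.sum_eq_zero fun i _ => by
        rw [show h i = 0 from Complex.ext (hendB _ hre0 i) (hendB _ him0 i)]; simp
      linarith
    obtain ⟨α, hα, hb⟩ := zp_minmax TB hTBc hTBne (fun h => quadFormC MB h) (zp_cont MB) hposB
    refine ⟨α, hα, fun f => ?_⟩
    by_cases hf : f = fun _ => (0:ℂ)
    · have h1 : quadFormC MB f = 0 := by rw [hf]; simp [quadFormC]
      have h2 : (∑ i, ‖f i‖^2) = 0 := by rw [hf]; simp
      rw [h1, h2, mul_zero, mul_zero]; exact ⟨le_rfl, le_rfl⟩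
    · set fE : EuclideanSpace ℂ (Fin (k+1)) := WithLp.toLp 2 f with hfEdef
      have hfE : fE ≠ 0 := fun h0 => hf (funext fun i => congrArg (fun g : EuclideanSpace ℂ (Fin (k+1)) => g i) h0)
      set r : ℝ := ‖fE‖ with hrdef
      have hr : 0 < r := norm_pos_iff.2 hfE
      set u0 : EuclideanSpace ℂ (Fin (k+1)) := (r⁻¹ : ℝ) • fE with hu0def
      have hu0T : u0 ∈ TB := by
        rw [hTBdef, mem_sphere_zero_iff_norm, hu0def, hrdef]
        exact norm_smul_inv_norm (𝕜 := ℝ) hfE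
      have hfu : ∀ j, fE j = (r:ℂ) * u0 j := by
        intro j
        have h5 : u0 j = (r⁻¹:ℝ) • fE j := by rw [hu0def]; rfl
        rw [h5, Complex.real_smul, Complex.ofReal_inv, ← mul_assoc,
          mul_inv_cancel₀ (Complex.ofReal_ne_zero.2 hr.ne'), one_mul]
      have hscal : quadFormC MB fE = r^2 * quadFormC MB u0 := by
        rw [hCB fE, hCB u0]
        have a1 : (fun l => (fE l).re) = fun l => r * (u0 l).re :=
          funext fun l => by rw [hfu l, Complex.re_ofReal_mul]
        have a2 : (fun l => (fE l).im) = fun l => r * (u0 l).im :=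
          funext fun l => by rw [hfu l, Complex.im_ofReal_mul]
        rw [a1, a2]
        have b1 : zpQ ℓ ρ ψ (fun l => r * (u0 l).re) = r^2 * zpQ ℓ ρ ψ (fun l => (u0 l).re) :=
          zp_smul ℓ ρ ψ _ r
        have b2 : zpQ ℓ ρ ψ (fun l => r * (u0 l).im) = r^2 * zpQ ℓ ρ ψ (fun l => (u0 l).im) :=
          zp_smul ℓ ρ ψ _ r
        rw [b1, b2]; ring
      have hnf : (∑ i, ‖fE i‖^2) = r^2 := by rw [hrdef]; exact (zp_normsq _).symm
      obtain ⟨hb1, hb2⟩ := hb u0 hu0T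
      constructor
      · show 1/α * (∑ i, ‖fE i‖^2) ≤ quadFormC MB fE
        rw [hnf, hscal]; nlinarith [sq_nonneg r]
      · show quadFormC MB fE ≤ α * (∑ i, ‖fE i‖^2)
        rw [hnf, hscal]; nlinarith [sq_nonneg r]
end

section
/- Let k ≥ 1 and N ≥ 1 be integers, let V ⊆ ℝ^N be a nonempty bounded open connected set, and for each e ∈ {0,…,k} let S_e ⊆ ∂V be a nonempty set, the sets S_e being pairwise disjoint. Let φ_e : ℝ^N → ℝ (e ∈ {0,…,k}) be continuously differentiable on an open neighborhood of the closure of V, with φ_e ≥ 0 on the closure of V, ∑_{e=0}^k φ_e = 1 on the closure of V, and φ_e = 1 on S_e for every e. Define the real (k+1)×(k+1) matrices A_{l,m} := ∫_V ⟨∇φ_l(x), ∇φ_m(x)⟩ dx and B_{l,m} := ∫_V φ_l(x)·φ_m(x) dx. Then A is positive semidefinite, B is positive definite, and there exist constants α_A > 0 and α_B > 0 such that for every f ∈ ℂ^{k+1}: (1/α_A)·|f⌞1⃗|² ≤ ∑_{l,m} A_{l,m}·f_l·conj(f_m) ≤ α_A·|f⌞1⃗|², and (1/α_B)·|f|² ≤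 ∑_{l,m} B_{l,m}·f_l·conj(f_m) ≤ α_B·|f|². -/
open MeasureTheory Set

/-- The Euclidean inner product `⟨∇φ(x), ∇φ'(x)⟩` of the gradients of two scalar functions
on `ℝ^N`. -/
noncomputable def gradDot (N : ℕ) (φ φ' : (Fin N → ℝ) → ℝ) (x : Fin N → ℝ) : ℝ :=
  ∑ i, fderiv ℝ φ x (Pi.single i 1) * fderiv ℝ φ' x (Pi.single i 1)

noncomputable def rquad {n : ℕ} (M : Fin n → Fin n → ℝ) (c : Fin n → ℝ) : ℝ :=
  ∑ l, ∑ m, M l m * c l * c m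

lemma rquad_smul {n : ℕ} (M : Fin n → Fin n → ℝ) (t : ℝ) (c : Fin n → ℝ) :
    rquad M (t • c) = t ^ 2 * rquad M c := by
  unfold rquad
  rw [Finset.mul_sum]
  refine Finset.sum_congr rfl fun l _ => ?_
  rw [Finset.mul_sum]
  refine Finset.sum_congr rfl fun m _ => ?_
  simp only [Pi.smul_apply, smul_eq_mul]
  ring

lemma rquad_shift {n : ℕ} (M : Fin n → Fin n → ℝ)
    (h1 : ∀ l, ∑ m, M l m = 0) (h2 : ∀ m, ∑ l, M l m = 0)
    (c : Fin n → ℝ) (s : ℝ) :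
    rquad M (fun i => c i + s) = rquad M c := by
  unfold rquad
  have step1 : ∀ l : Fin n, ∑ m, M l m * (c l + s) * (c m + s)
      = ∑ m, M l m * (c l + s) * c m := by
    intro l
    have : ∑ m, M l m * (c l + s) * (c m + s)
        = (∑ m, M l m * (c l + s) * c m) + ((c l + s) * s) * ∑ m, M l m := by
      rw [Finset.mul_sum, ← Finset.sum_add_distrib]
      exact Finset.sum_congr rfl fun m _ => by ring
    rw [this, h1 l]; ring
  calc ∑ l, ∑ m, M l m * (c l + s) * (c m + s)
      = ∑ l, ∑ m, M l m * (c l + s) * c m := Finset.sum_congr rfl fun l _ => step1 l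
    _ = ∑ m, ∑ l, M l m * (c l + s) * c m := Finset.sum_comm
    _ = ∑ m, ∑ l, M l m * c l * c m := by
        refine Finset.sum_congr rfl fun m _ => ?_
        have : ∑ l, M l m * (c l + s) * c m
            = (∑ l, M l m * c l * c m) + (s * c m) * ∑ l, M l m := by
          rw [Finset.mul_sum, ← Finset.sum_add_distrib]
          exact Finset.sum_congr rfl fun l _ => by ring
        rw [this, h2 m]; ring
    _ = ∑ l, ∑ m, M l m * c l * c m := Finset.sum_comm

lemma rquad_continuous {n : ℕ} (M : Fin n → Fin n → ℝ) : Continuous (rquad M) := by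
  unfold rquad
  refine continuous_finset_sum _ fun l _ => continuous_finset_sum _ fun m _ => ?_
  exact (continuous_const.mul (continuous_apply l)).mul (continuous_apply m)

lemma aux_minmax {n : ℕ} (q : (Fin n → ℝ) → ℝ) (S : Set (Fin n → ℝ))
    (hS : IsCompact S) (hne : S.Nonempty) (hq : Continuous q)
    (hpos : ∀ c ∈ S, 0 < q c) :
    ∃ α : ℝ, 0 < α ∧ ∀ c ∈ S, 1 / α ≤ q c ∧ q c ≤ α := by
  obtain ⟨cm, hcm, hmin⟩ := hS.exists_isMinOn hne hq.continuousOn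
  obtain ⟨cM, hcM, hmax⟩ := hS.exists_isMaxOn hne hq.continuousOn
  have hm : 0 < q cm := hpos cm hcm
  refine ⟨max (q cM) (1 / q cm), lt_of_lt_of_le hm ((hmin hcM).trans (le_max_left _ _)), ?_⟩
  intro c hc
  have hα : 0 < max (q cM) (1 / q cm) :=
    lt_of_lt_of_le hm ((hmin hcM).trans (le_max_left _ _))
  constructor
  · have h1 : 1 / max (q cM) (1 / q cm) ≤ 1 / (1 / q cm) :=
      one_div_le_one_div_of_le (by positivity) (le_max_right _ _)
    rw [one_div_one_div] at h1
    exact h1.trans (hmin hc)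
  · exact (hmax hc).trans (le_max_left _ _)

lemma sphere_compact {n : ℕ} : IsCompact {c : Fin n → ℝ | ∑ i, c i ^ 2 = 1} := by
  refine IsCompact.of_isClosed_subset (isCompact_closedBall (0 : Fin n → ℝ) 1)
    (isClosed_eq (continuous_finset_sum _ fun i _ => (continuous_apply i).pow 2)
      continuous_const) ?_
  intro c hc
  simp only [Set.mem_setOf_eq] at hc
  rw [Metric.mem_closedBall, dist_zero_right]
  refine (pi_norm_le_iff_of_nonneg zero_le_one).2 fun i => ?_
  rw [Real.norm_eq_abs, ← Real.sqrt_one, ← Real.sqrt_sq_eq_abs]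
  refine Real.sqrt_le_sqrt ?_
  rw [← hc]
  exact Finset.single_le_sum (fun j _ => sq_nonneg (c j)) (Finset.mem_univ i)

lemma sumsq_zero {n : ℕ} {c : Fin n → ℝ} (h : ∑ i, c i ^ 2 = 0) : c = 0 := by
  funext i
  have := (Finset.sum_eq_zero_iff_of_nonneg (fun j _ => sq_nonneg (c j))).1 h i (Finset.mem_univ i)
  exact pow_eq_zero_iff (two_ne_zero).symm.symm |>.1 this

/-- Two-sided comparison from positivity on a subset-sphere. -/

lemma quad_comp_core {n : ℕ} (M : Fin n → Fin n → ℝ) (P : (Fin n → ℝ) → Prop)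
    (hPc : IsClosed {c | P c}) (hP0 : ∀ (t : ℝ) c, P c → P (t • c))
    (hne : ∃ c, P c ∧ ∑ i, c i ^ 2 = 1)
    (hpos : ∀ c : Fin n → ℝ, P c → ∑ i, c i ^ 2 = 1 → 0 < rquad M c) :
    ∃ α : ℝ, 0 < α ∧ ∀ c, P c →
      (1 / α) * (∑ i, c i ^ 2) ≤ rquad M c ∧ rquad M c ≤ α * (∑ i, c i ^ 2) := by
  obtain ⟨α, hα, hcomp⟩ := aux_minmax (rquad M)
    ({c | P c} ∩ {c : Fin n → ℝ | ∑ i, c i ^ 2 = 1})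
    (sphere_compact.inter_left hPc) (by obtain ⟨c, h1, h2⟩ := hne; exact ⟨c, h1, h2⟩)
    (rquad_continuous M) (fun c hc => hpos c hc.1 hc.2)
  refine ⟨α, hα, fun c hPcc => ?_⟩
  rcases eq_or_ne (∑ i, c i ^ 2) 0 with hz | hz
  · have hc0 : c = 0 := sumsq_zero hz
    subst hc0
    simp [rquad, hz]
  · have hpossum : 0 < ∑ i, c i ^ 2 :=
      lt_of_le_of_ne (Finset.sum_nonneg fun i _ => sq_nonneg _) (Ne.symm hz)
    set r : ℝ := Real.sqrt (∑ i, c i ^ 2) with hr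
    have hrpos : 0 < r := Real.sqrt_pos.2 hpossum
    have hr2 : r ^ 2 = ∑ i, c i ^ 2 := Real.sq_sqrt hpossum.le
    have hmem : (r⁻¹ • c) ∈ {c | P c} ∩ {c : Fin n → ℝ | ∑ i, c i ^ 2 = 1} := by
      refine ⟨hP0 _ _ hPcc, ?_⟩
      simp only [Set.mem_setOf_eq, Pi.smul_apply, smul_eq_mul, mul_pow, ← Finset.mul_sum]
      rw [← hr2]
      field_simp
    obtain ⟨hlo, hhi⟩ := hcomp _ hmem
    have hval : rquad M c = r ^ 2 * rquad M (r⁻¹ • c) := by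
      rw [rquad_smul, ← mul_assoc, ← mul_pow, mul_inv_cancel₀ hrpos.ne', one_pow, one_mul]
    constructor
    · rw [hval, ← hr2]
      calc 1 / α * r ^ 2 = r ^ 2 * (1 / α) := by ring
        _ ≤ r ^ 2 * rquad M (r⁻¹ • c) := by
            exact mul_le_mul_of_nonneg_left hlo (sq_nonneg r)
    · rw [hval, ← hr2]
      calc r ^ 2 * rquad M (r⁻¹ • c) ≤ r ^ 2 * α :=
            mul_le_mul_of_nonneg_left hhi (sq_nonneg r)
        _ = α * r ^ 2 := by ring

lemma sphere_nonempty1 {n : ℕ} (hn : 0 < n) : ∃ c : Fin n → ℝ, ∑ i, c i ^ 2 = 1 := by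
  refine ⟨fun i => if i = (⟨0, hn⟩ : Fin n) then (1:ℝ) else 0, ?_⟩
  have hpt : ∀ i : Fin n, ((if i = (⟨0, hn⟩ : Fin n) then (1:ℝ) else 0)) ^ 2
      = if i = (⟨0, hn⟩ : Fin n) then (1:ℝ) else 0 := by
    intro i
    rcases eq_or_ne i (⟨0, hn⟩ : Fin n) with h | h <;> simp [h]
  simp only [hpt]
  rw [Finset.sum_ite_eq' Finset.univ]
  simp

lemma sphere_nonempty2 {n : ℕ} (hn : 2 ≤ n) :
    ∃ c : Fin n → ℝ, (∑ i, c i = 0) ∧ ∑ i, c i ^ 2 = 1 := by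
  have h0 : 0 < n := by omega
  have h1 : 1 < n := by omega
  set a : Fin n := ⟨0, h0⟩
  set b : Fin n := ⟨1, h1⟩
  have hab : a ≠ b := by simp [a, b, Fin.ext_iff]
  have hs2 : ((Real.sqrt 2)⁻¹ : ℝ) ^ 2 = 2⁻¹ := by
    rw [inv_pow, Real.sq_sqrt (by norm_num : (0:ℝ) ≤ 2)]
  refine ⟨fun i => if i = a then (Real.sqrt 2)⁻¹ else if i = b then -(Real.sqrt 2)⁻¹ else 0,
    ?_, ?_⟩
  · have hpt : ∀ i : Fin n,
        (if i = a then (Real.sqrt 2)⁻¹ else if i = b then -(Real.sqrt 2)⁻¹ else 0)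
        = (if i = a then (Real.sqrt 2)⁻¹ else 0) + (if i = b then -(Real.sqrt 2)⁻¹ else 0) := by
      intro i
      rcases eq_or_ne i a with h | h
      · subst h; simp [hab]
      · simp [h]
    simp only [hpt]
    rw [Finset.sum_add_distrib, Finset.sum_ite_eq' Finset.univ a, Finset.sum_ite_eq' Finset.univ b]
    simp
  · have hpt : ∀ i : Fin n,
        (if i = a then (Real.sqrt 2)⁻¹ else if i = b then -(Real.sqrt 2)⁻¹ else 0) ^ 2
        = (if i = a then 2⁻¹ else 0) + (if i = b then 2⁻¹ else 0) := by
      intro i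
      rcases eq_or_ne i a with h | h
      · subst h; simp [hab, hs2]
      · rcases eq_or_ne i b with h' | h'
        · subst h'; simp [h, hs2]
        · simp [h, h']
    simp only [hpt]
    rw [Finset.sum_add_distrib, Finset.sum_ite_eq' Finset.univ a, Finset.sum_ite_eq' Finset.univ b]
    norm_num

lemma norm_sq_complex (z : ℂ) : ‖z‖ ^ 2 = z.re ^ 2 + z.im ^ 2 := by
  rw [← Complex.normSq_eq_norm_sq, Complex.normSq_apply]
  ring

lemma quadFormC_eq {n : ℕ} (M : Fin n → Fin n → ℝ) (f : Fin n → ℂ) :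
    quadFormC M f = rquad M (fun i => (f i).re) + rquad M (fun i => (f i).im) := by
  unfold quadFormC rquad
  rw [Complex.re_sum, ← Finset.sum_add_distrib]
  refine Finset.sum_congr rfl fun l _ => ?_
  rw [Complex.re_sum, ← Finset.sum_add_distrib]
  refine Finset.sum_congr rfl fun j _ => ?_
  simp [Complex.mul_re, Complex.mul_im, Complex.conj_re, Complex.conj_im]
  try ring

lemma perpOne_re {n : ℕ} (f : Fin n → ℂ) (i : Fin n) :
    (perpOne f i).re = (f i).re - (∑ j, (f j).re) / (n : ℝ) := by
  simp [perpOne, Complex.div_natCast_re, Complex.re_sum]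

lemma perpOne_im {n : ℕ} (f : Fin n → ℂ) (i : Fin n) :
    (perpOne f i).im = (f i).im - (∑ j, (f j).im) / (n : ℝ) := by
  simp [perpOne, Complex.div_natCast_im, Complex.im_sum]

lemma norm_perp_sum {n : ℕ} (f : Fin n → ℂ) :
    ∑ i, ‖perpOne f i‖ ^ 2 =
      (∑ i, ((f i).re - (∑ j, (f j).re) / (n : ℝ)) ^ 2)
      + ∑ i, ((f i).im - (∑ j, (f j).im) / (n : ℝ)) ^ 2 := by
  rw [← Finset.sum_add_distrib]
  refine Finset.sum_congr rfl fun i _ => ?_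
  rw [norm_sq_complex, perpOne_re, perpOne_im]

lemma norm_f_sum {n : ℕ} (f : Fin n → ℂ) :
    ∑ i, ‖f i‖ ^ 2 = (∑ i, (f i).re ^ 2) + ∑ i, (f i).im ^ 2 := by
  rw [← Finset.sum_add_distrib]
  exact Finset.sum_congr rfl fun i _ => norm_sq_complex (f i)

lemma zero_of_setIntegral_zero {N : ℕ} {V : Set (Fin N → ℝ)} (hV : IsOpen V)
    {h : (Fin N → ℝ) → ℝ} (hc : ContinuousOn h V) (hnn : ∀ x ∈ V, 0 ≤ h x)
    (hint : IntegrableOn h V) (hI : ∫ x in V, h x = 0) : ∀ x ∈ V, h x = 0 := by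
  have hae : h =ᵐ[volume.restrict V] 0 := by
    refine (setIntegral_eq_zero_iff_of_nonneg_ae ?_ hint).1 hI
    exact (ae_restrict_iff' hV.measurableSet).2 (ae_of_all _ hnn)
  by_contra hcon
  push_neg at hcon
  obtain ⟨x0, hx0, hne⟩ := hcon
  have hpos : 0 < h x0 := lt_of_le_of_ne (hnn x0 hx0) (Ne.symm hne)
  set W : Set (Fin N → ℝ) := V ∩ h ⁻¹' (Set.Ioi 0) with hW
  have hWopen : IsOpen W := hc.isOpen_inter_preimage hV isOpen_Ioi
  have hWne : W.Nonempty := ⟨x0, hx0, hpos⟩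
  have hWsub : W ⊆ {x | h x ≠ 0} := fun x hx => ne_of_gt hx.2
  have hμW : volume W = 0 := by
    have h0 : (volume.restrict V) {x | h x ≠ 0} = 0 := by
      have := hae
      rw [Filter.EventuallyEq, ae_iff] at this
      simpa using this
    have : (volume.restrict V) W = 0 :=
      measure_mono_null hWsub h0
    rwa [Measure.restrict_apply' hV.measurableSet,
      Set.inter_eq_left.2 (fun x hx => hx.1)] at this
  exact (hWopen.measure_pos volume hWne).ne' hμW

lemma const_of_fderiv_zero_on {N : ℕ} {V : Set (Fin N → ℝ)} (hV : IsOpen V)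
    (hconn : IsPreconnected V) {g : (Fin N → ℝ) → ℝ}
    (hdiff : ∀ x ∈ V, DifferentiableAt ℝ g x) (hder : ∀ x ∈ V, fderiv ℝ g x = 0)
    {x y : Fin N → ℝ} (hx : x ∈ V) (hy : y ∈ V) : g x = g y := by
  -- local constancy on balls
  have hball : ∀ z ∈ V, ∃ ε > 0, Metric.ball z ε ⊆ V ∧
      ∀ w ∈ Metric.ball z ε, g w = g z := by
    intro z hz
    obtain ⟨ε, hε, hsub⟩ := Metric.isOpen_iff.1 hV z hz
    refine ⟨ε, hε, hsub, fun w hw => ?_⟩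
    refine (convex_ball z ε).is_const_of_fderivWithin_eq_zero
      (fun u hu => (hdiff u (hsub hu)).differentiableWithinAt) ?_ hw (Metric.mem_ball_self hε)
    intro u hu
    rw [fderivWithin_of_isOpen Metric.isOpen_ball hu]
    exact hder u (hsub hu)
  set u : Set (Fin N → ℝ) := ⋃ (z : Fin N → ℝ) (hz : z ∈ V) (he : g z = g x),
    Metric.ball z (Classical.choose (hball z hz))
  set v : Set (Fin N → ℝ) := ⋃ (z : Fin N → ℝ) (hz : z ∈ V) (he : g z ≠ g x),
    Metric.ball z (Classical.choose (hball z hz))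
  have hu_open : IsOpen u := isOpen_iUnion fun z => isOpen_iUnion fun hz =>
    isOpen_iUnion fun _ => Metric.isOpen_ball
  have hv_open : IsOpen v := isOpen_iUnion fun z => isOpen_iUnion fun hz =>
    isOpen_iUnion fun _ => Metric.isOpen_ball
  have hVuv : V ⊆ u ∪ v := by
    intro z hz
    rcases eq_or_ne (g z) (g x) with h | h
    · exact Or.inl (Set.mem_iUnion.2 ⟨z, Set.mem_iUnion.2 ⟨hz, Set.mem_iUnion.2
        ⟨h, Metric.mem_ball_self (Classical.choose_spec (hball z hz)).1⟩⟩⟩)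
    · exact Or.inr (Set.mem_iUnion.2 ⟨z, Set.mem_iUnion.2 ⟨hz, Set.mem_iUnion.2
        ⟨h, Metric.mem_ball_self (Classical.choose_spec (hball z hz)).1⟩⟩⟩)
  have hgu : ∀ w ∈ u, g w = g x := by
    intro w hw
    obtain ⟨z, hmem⟩ := Set.mem_iUnion.1 hw
    obtain ⟨hz, hmem⟩ := Set.mem_iUnion.1 hmem
    obtain ⟨he, hmem⟩ := Set.mem_iUnion.1 hmem
    rw [(Classical.choose_spec (hball z hz)).2.2 w hmem, he]
  have hgv : ∀ w ∈ v, g w ≠ g x := by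
    intro w hw
    obtain ⟨z, hmem⟩ := Set.mem_iUnion.1 hw
    obtain ⟨hz, hmem⟩ := Set.mem_iUnion.1 hmem
    obtain ⟨he, hmem⟩ := Set.mem_iUnion.1 hmem
    rw [(Classical.choose_spec (hball z hz)).2.2 w hmem]
    exact he
  have hdisj : (V ∩ (u ∩ v)) = ∅ := by
    rw [Set.eq_empty_iff_forall_notMem]
    rintro w ⟨-, hwu, hwv⟩
    exact absurd (hgu w hwu) (hgv w hwv)
  by_contra hne
  have h1 : (V ∩ u).Nonempty := ⟨x, hx, hVuv hx |>.resolve_right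
    (fun hxv => (hgv x hxv) rfl)⟩
  have h2 : (V ∩ v).Nonempty := by
    refine ⟨y, hy, (hVuv hy).resolve_left ?_⟩
    intro hyu
    exact hne ((hgu y hyu).symm)
  obtain ⟨w, hw⟩ := hconn u v hu_open hv_open hVuv h1 h2
  rw [hdisj] at hw
  exact hw

lemma sum_grad_sq {K N : ℕ} (D : Fin K → Fin N → ℝ) (c : Fin K → ℝ) :
    ∑ l, ∑ m, (∑ i, D l i * D m i) * c l * c m = ∑ i, (∑ e, c e * D e i) ^ 2 := by
  have h1 : ∀ l m : Fin K, (∑ i, D l i * D m i) * c l * c m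
      = ∑ i, (c l * D l i) * (c m * D m i) := by
    intro l m
    rw [Finset.sum_mul, Finset.sum_mul]
    exact Finset.sum_congr rfl fun i _ => by ring
  calc ∑ l, ∑ m, (∑ i, D l i * D m i) * c l * c m
      = ∑ l, ∑ m, ∑ i, (c l * D l i) * (c m * D m i) :=
        Finset.sum_congr rfl fun l _ => Finset.sum_congr rfl fun m _ => h1 l m
    _ = ∑ l, ∑ i, ∑ m, (c l * D l i) * (c m * D m i) :=
        Finset.sum_congr rfl fun l _ => Finset.sum_comm
    _ = ∑ i, ∑ l, ∑ m, (c l * D l i) * (c m * D m i) := Finset.sum_comm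
    _ = ∑ i, (∑ e, c e * D e i) ^ 2 := by
        refine Finset.sum_congr rfl fun i _ => ?_
        rw [sq, Finset.sum_mul_sum]

lemma sum_mul_sq {K : ℕ} (p : Fin K → ℝ) (c : Fin K → ℝ) :
    ∑ l, ∑ m, (p l * p m) * c l * c m = (∑ e, c e * p e) ^ 2 := by
  rw [sq, Finset.sum_mul_sum]
  exact Finset.sum_congr rfl fun l _ => Finset.sum_congr rfl fun m _ => by ring

lemma rquad_setIntegral {n N : ℕ} {V : Set (Fin N → ℝ)}
    (G : Fin n → Fin n → (Fin N → ℝ) → ℝ) (hint : ∀ l m, IntegrableOn (G l m) V volume)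
    (c : Fin n → ℝ) :
    rquad (fun l m => ∫ x in V, G l m x) c
      = ∫ x in V, ∑ l, ∑ m, G l m x * c l * c m := by
  unfold rquad
  calc ∑ l, ∑ m, (∫ x in V, G l m x) * c l * c m
      = ∑ l, ∑ m, ∫ x in V, G l m x * c l * c m := by
        refine Finset.sum_congr rfl fun l _ => Finset.sum_congr rfl fun m _ => ?_
        rw [← integral_mul_const, ← integral_mul_const]
    _ = ∑ l, ∫ x in V, ∑ m, G l m x * c l * c m := by
        refine Finset.sum_congr rfl fun l _ => ?_
        exact (integral_finset_sum _ fun m _ => ((hint l m).mul_const _).mul_const _).symm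
    _ = ∫ x in V, ∑ l, ∑ m, G l m x * c l * c m := by
        refine (integral_finset_sum _ fun l _ => ?_).symm
        exact integrable_finset_sum _ fun m _ => ((hint l m).mul_const _).mul_const _

lemma clm_eq_zero {N : ℕ} (L : (Fin N → ℝ) →L[ℝ] ℝ)
    (h : ∀ i, L (Pi.single i 1) = 0) : L = 0 := by
  ext v
  have hs : ∀ i : Fin N, (Pi.single i 1 : Fin N → ℝ) = fun j => if i = j then 1 else 0 :=
    fun i => funext fun j => by simp [Pi.single_apply, eq_comm]
  have hv : v = ∑ i, v i • (Pi.single i 1 : Fin N → ℝ) := by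
    simp only [hs]
    exact pi_eq_sum_univ v
  rw [hv]
  simp [map_sum, h]

lemma dot_eq_rquad {n : ℕ} (M : Fin n → Fin n → ℝ) (x : Fin n → ℝ) :
    dotProduct x (Matrix.mulVec (Matrix.of M) x) = rquad M x := by
  unfold rquad
  simp only [Matrix.mulVec, dotProduct, Matrix.of_apply]
  refine Finset.sum_congr rfl fun l _ => ?_
  rw [Finset.mul_sum]
  exact Finset.sum_congr rfl fun m _ => by ring

lemma eq_const_on_closure {N : ℕ} {V U₀ : Set (Fin N → ℝ)} (hU₀ : IsOpen U₀)
    (hsub : closure V ⊆ U₀) {g : (Fin N → ℝ) → ℝ} (hg : ContinuousOn g U₀)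
    {c0 : ℝ} (hgV : ∀ x ∈ V, g x = c0) : ∀ x ∈ closure V, g x = c0 := by
  intro x hx
  have hct : ContinuousAt g x := hg.continuousAt (hU₀.mem_nhds (hsub hx))
  have h1 : Filter.Tendsto g (nhdsWithin x V) (nhds (g x)) :=
    hct.tendsto.mono_left nhdsWithin_le_nhds
  have h2 : Filter.Tendsto g (nhdsWithin x V) (nhds c0) := by
    refine Filter.Tendsto.congr' ?_ tendsto_const_nhds
    filter_upwards [self_mem_nhdsWithin] with y hy
    exact (hgV y hy).symm
  have hnb : (nhdsWithin x V).NeBot := mem_closure_iff_nhdsWithin_neBot.1 hx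
  exact tendsto_nhds_unique h1 h2

/-- (Lemma 3.1, N-dimensional part.) For a `C¹` partition of unity `(φ_e)`
on a bounded open connected `V ⊆ ℝ^N` adapted to pairwise disjoint boundary faces `S_e`, the
stiffness matrix `A_{l,m} = ∫_V ⟨∇φ_l, ∇φ_m⟩` is positive semidefinite with quadratic form
equivalent to `|f⌞1⃗|²`, and the mass matrix `B_{l,m} = ∫_V φ_l·φ_m` is positive definite
with quadratic form equivalent to `|f|²`. -/
theorem stmt10 (k N : ℕ) (hk : 1 ≤ k) (hN : 1 ≤ N)
    (V : Set (Fin N → ℝ)) (hV_ne : V.Nonempty) (hV_open : IsOpen V)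
    (hV_bdd : Bornology.IsBounded V) (hV_conn : IsConnected V)
    (S : Fin (k + 1) → Set (Fin N → ℝ))
    (hS_ne : ∀ e, (S e).Nonempty) (hS_sub : ∀ e, S e ⊆ frontier V)
    (hS_disj : ∀ e e', e ≠ e' → Disjoint (S e) (S e'))
    (φ : Fin (k + 1) → (Fin N → ℝ) → ℝ)
    (hφ_smooth : ∀ e, ∃ U : Set (Fin N → ℝ),
      IsOpen U ∧ closure V ⊆ U ∧ ContDiffOn ℝ 1 (φ e) U)
    (hφ_nonneg : ∀ e, ∀ x ∈ closure V, 0 ≤ φ e x)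
    (hφ_sum : ∀ x ∈ closure V, ∑ e, φ e x = 1)
    (hφ_face : ∀ e, ∀ x ∈ S e, φ e x = 1) :
    (Matrix.PosSemidef (Matrix.of fun l m : Fin (k + 1) =>
        ∫ x in V, gradDot N (φ l) (φ m) x)) ∧
    (Matrix.PosDef (Matrix.of fun l m : Fin (k + 1) =>
        ∫ x in V, φ l x * φ m x)) ∧
    (∃ αA : ℝ, 0 < αA ∧ ∀ f : Fin (k + 1) → ℂ,
      (1 / αA) * (∑ i, ‖perpOne f i‖ ^ 2) ≤
          quadFormC (fun l m => ∫ x in V, gradDot N (φ l) (φ m) x) f ∧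
        quadFormC (fun l m => ∫ x in V, gradDot N (φ l) (φ m) x) f ≤
          αA * (∑ i, ‖perpOne f i‖ ^ 2)) ∧
    (∃ αB : ℝ, 0 < αB ∧ ∀ f : Fin (k + 1) → ℂ,
      (1 / αB) * (∑ i, ‖f i‖ ^ 2) ≤
          quadFormC (fun l m => ∫ x in V, φ l x * φ m x) f ∧
        quadFormC (fun l m => ∫ x in V, φ l x * φ m x) f ≤
          αB * (∑ i, ‖f i‖ ^ 2)) := by
  classical
  choose U hUopen hUsub hUc1 using hφ_smooth
  set U₀ : Set (Fin N → ℝ) := ⋂ e, U e with hU₀def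
  have hU₀open : IsOpen U₀ := isOpen_iInter_of_finite hUopen
  have hU₀sub : closure V ⊆ U₀ := Set.subset_iInter hUsub
  have hVU₀ : V ⊆ U₀ := subset_closure.trans hU₀sub
  have hc1 : ∀ e, ContDiffOn ℝ 1 (φ e) U₀ := fun e => (hUc1 e).mono (Set.iInter_subset U e)
  have hK : IsCompact (closure V) := hV_bdd.isCompact_closure
  have hdiffAt : ∀ e, ∀ x ∈ U₀, DifferentiableAt ℝ (φ e) x := fun e x hx =>
    ((hc1 e).differentiableOn one_ne_zero).differentiableAt (hU₀open.mem_nhds hx)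
  have hcontφ : ∀ e, ContinuousOn (φ e) U₀ := fun e => (hc1 e).continuousOn
  have hcontD : ∀ e, ContinuousOn (fun x => fderiv ℝ (φ e) x) U₀ := fun e =>
    (hc1 e).continuousOn_fderiv_of_isOpen hU₀open le_rfl
  have hcontGD : ∀ l m, ContinuousOn (gradDot N (φ l) (φ m)) U₀ := by
    intro l m
    refine continuousOn_finset_sum _ fun i _ => ?_
    exact ((hcontD l).clm_apply continuousOn_const).mul ((hcontD m).clm_apply continuousOn_const)
  have hIntA : ∀ l m, IntegrableOn (gradDot N (φ l) (φ m)) V volume := fun l m =>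
    (((hcontGD l m).mono hU₀sub).integrableOn_compact hK).mono_set subset_closure
  have hcontB : ∀ l m, ContinuousOn (fun x => φ l x * φ m x) U₀ := fun l m =>
    (hcontφ l).mul (hcontφ m)
  have hIntB : ∀ l m, IntegrableOn (fun x => φ l x * φ m x) V volume := fun l m =>
    (((hcontB l m).mono hU₀sub).integrableOn_compact hK).mono_set subset_closure
  set A : Fin (k+1) → Fin (k+1) → ℝ :=
    fun l m => ∫ x in V, gradDot N (φ l) (φ m) x with hAdef
  set B : Fin (k+1) → Fin (k+1) → ℝ := fun l m => ∫ x in V, φ l x * φ m x with hBdef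
  have hAsymm : ∀ l m, A l m = A m l := by
    intro l m
    have h : gradDot N (φ l) (φ m) = gradDot N (φ m) (φ l) := by
      funext x; exact Finset.sum_congr rfl fun i _ => mul_comm _ _
    simp only [hAdef, h]
  have hBsymm : ∀ l m, B l m = B m l := by
    intro l m
    have h : (fun x => φ l x * φ m x) = fun x => φ m x * φ l x :=
      funext fun x => mul_comm _ _
    simp only [hBdef, h]
  have hDsum : ∀ x ∈ V, ∑ m, fderiv ℝ (φ m) x = 0 := by
    intro x hx
    have hsum1 : fderiv ℝ (fun y => ∑ m, φ m y) x = ∑ m, fderiv ℝ (φ m) x :=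
      fderiv_fun_sum fun m _ => hdiffAt m x (hVU₀ hx)
    have heq : (fun y => ∑ m, φ m y) =ᶠ[nhds x] fun _ => (1:ℝ) :=
      Filter.eventuallyEq_of_mem (hV_open.mem_nhds hx) fun y hy => hφ_sum y (subset_closure hy)
    rw [← hsum1, heq.fderiv_eq]
    exact fderiv_const_apply 1
  have hA1 : ∀ l, ∑ m, A l m = 0 := by
    intro l
    have h0 : EqOn (fun x => ∑ m, gradDot N (φ l) (φ m) x) (fun _ => (0:ℝ)) V := by
      intro x hx
      show ∑ m, gradDot N (φ l) (φ m) x = 0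
      unfold gradDot
      rw [Finset.sum_comm]
      refine Finset.sum_eq_zero fun i _ => ?_
      have hz : ∑ m, fderiv ℝ (φ m) x (Pi.single i 1) = 0 := by
        calc ∑ m, fderiv ℝ (φ m) x (Pi.single i 1)
            = (∑ m, fderiv ℝ (φ m) x) (Pi.single i 1) :=
              (ContinuousLinearMap.sum_apply _ _ _).symm
          _ = 0 := by rw [hDsum x hx]; rfl
      rw [← Finset.mul_sum, hz, mul_zero]
    calc ∑ m, A l m = ∫ x in V, ∑ m, gradDot N (φ l) (φ m) x :=
          (integral_finset_sum _ fun m _ => hIntA l m).symm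
      _ = ∫ _x in V, (0:ℝ) := setIntegral_congr_fun hV_open.measurableSet h0
      _ = 0 := by simp
  have hA2 : ∀ m, ∑ l, A l m = 0 := by
    intro m
    calc ∑ l, A l m = ∑ l, A m l := Finset.sum_congr rfl fun l _ => hAsymm l m
      _ = 0 := hA1 m
  have hgdiff : ∀ (c : Fin (k+1) → ℝ), ∀ x ∈ U₀,
      DifferentiableAt ℝ (fun y => ∑ e, c e * φ e y) x := fun c x hx =>
    DifferentiableAt.fun_sum fun e _ => (hdiffAt e x hx).const_mul (c e)
  have hgD : ∀ (c : Fin (k+1) → ℝ), ∀ x ∈ U₀, ∀ i,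
      fderiv ℝ (fun y => ∑ e, c e * φ e y) x (Pi.single i 1)
        = ∑ e, c e * fderiv ℝ (φ e) x (Pi.single i 1) := by
    intro c x hx i
    rw [fderiv_fun_sum fun e _ => (hdiffAt e x hx).const_mul (c e),
      ContinuousLinearMap.sum_apply]
    refine Finset.sum_congr rfl fun e _ => ?_
    rw [fderiv_const_mul (hdiffAt e x hx) (c e)]
    rfl
  have hgcont : ∀ (c : Fin (k+1) → ℝ), ContinuousOn (fun y => ∑ e, c e * φ e y) U₀ :=
    fun c => continuousOn_finset_sum _ fun e _ => continuousOn_const.mul (hcontφ e)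
  have hface : ∀ (c : Fin (k+1) → ℝ) (e : Fin (k+1)), ∀ x ∈ S e,
      ∑ m, c m * φ m x = c e := by
    intro c e x hx
    have hxcl : x ∈ closure V := frontier_subset_closure (hS_sub e hx)
    have h1 : φ e x = 1 := hφ_face e x hx
    have hz : ∀ m, m ≠ e → φ m x = 0 := by
      have hsum := hφ_sum x hxcl
      have hadd := Finset.add_sum_erase Finset.univ (fun m => φ m x) (Finset.mem_univ e)
      have hadd' : φ e x + ∑ m ∈ Finset.univ.erase e, φ m x = ∑ m, φ m x := hadd
      have herase : ∑ m ∈ Finset.univ.erase e, φ m x = 0 := by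
        rw [h1, hsum] at hadd'; linarith
      intro m hm
      exact (Finset.sum_eq_zero_iff_of_nonneg fun j _ =>
        hφ_nonneg j x hxcl).1 herase m (Finset.mem_erase.2 ⟨hm, Finset.mem_univ m⟩)
    rw [Finset.sum_eq_single e (fun m _ hm => by rw [hz m hm, mul_zero])
      (fun h => absurd (Finset.mem_univ e) h), h1, mul_one]
  have hface_const : ∀ (c : Fin (k+1) → ℝ) (c0 : ℝ),
      (∀ x ∈ V, ∑ e, c e * φ e x = c0) → ∀ e, c e = c0 := by
    intro c c0 hgV e
    obtain ⟨xe, hxe⟩ := hS_ne e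
    have hcl := eq_const_on_closure hU₀open hU₀sub (hgcont c) hgV
    have h2 : ∑ m, c m * φ m xe = c0 := hcl xe (frontier_subset_closure (hS_sub e hxe))
    exact (hface c e xe hxe).symm.trans h2
  have hquadA : ∀ c : Fin (k+1) → ℝ, rquad A c
      = ∫ x in V, ∑ i, (∑ e, c e * fderiv ℝ (φ e) x (Pi.single i 1)) ^ 2 := by
    intro c
    rw [hAdef, rquad_setIntegral _ hIntA c]
    congr 1
    funext x
    exact sum_grad_sq (fun e i => fderiv ℝ (φ e) x (Pi.single i 1)) c
  have hquadB : ∀ c : Fin (k+1) → ℝ, rquad B c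
      = ∫ x in V, (∑ e, c e * φ e x) ^ 2 := by
    intro c
    rw [hBdef, rquad_setIntegral _ hIntB c]
    congr 1
    funext x
    exact sum_mul_sq (fun e => φ e x) c
  have hAnonneg : ∀ c, 0 ≤ rquad A c := by
    intro c
    rw [hquadA c]
    exact setIntegral_nonneg hV_open.measurableSet fun x _ =>
      Finset.sum_nonneg fun i _ => sq_nonneg _
  have hBnonneg : ∀ c, 0 ≤ rquad B c := by
    intro c
    rw [hquadB c]
    exact setIntegral_nonneg hV_open.measurableSet fun x _ => sq_nonneg _
  have hBzero : ∀ c : Fin (k+1) → ℝ, rquad B c = 0 → c = 0 := by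
    intro c hc
    rw [hquadB c] at hc
    have hcont : ContinuousOn (fun x => (∑ e, c e * φ e x) ^ 2) U₀ := (hgcont c).pow 2
    have hint : IntegrableOn (fun x => (∑ e, c e * φ e x) ^ 2) V volume :=
      ((hcont.mono hU₀sub).integrableOn_compact hK).mono_set subset_closure
    have hzero := zero_of_setIntegral_zero hV_open (hcont.mono hVU₀)
      (fun x _ => sq_nonneg _) hint hc
    have hgV : ∀ x ∈ V, ∑ e, c e * φ e x = 0 := fun x hx =>
      pow_eq_zero_iff two_ne_zero |>.1 (hzero x hx)
    funext e
    simpa using hface_const c 0 hgV e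
  have hBposdef : ∀ c : Fin (k+1) → ℝ, c ≠ 0 → 0 < rquad B c := by
    intro c hc
    rcases lt_or_eq_of_le (hBnonneg c) with h | h
    · exact h
    · exact absurd (hBzero c h.symm) hc
  have hAzero : ∀ c : Fin (k+1) → ℝ, (∑ i, c i = 0) → rquad A c = 0 → c = 0 := by
    intro c hcs hc
    rw [hquadA c] at hc
    have hcontF : ContinuousOn
        (fun x => ∑ i, (∑ e, c e * fderiv ℝ (φ e) x (Pi.single i 1)) ^ 2) U₀ := by
      refine continuousOn_finset_sum _ fun i _ => ContinuousOn.pow ?_ 2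
      exact continuousOn_finset_sum _ fun e _ =>
        continuousOn_const.mul ((hcontD e).clm_apply continuousOn_const)
    have hintF : IntegrableOn
        (fun x => ∑ i, (∑ e, c e * fderiv ℝ (φ e) x (Pi.single i 1)) ^ 2) V volume :=
      ((hcontF.mono hU₀sub).integrableOn_compact hK).mono_set subset_closure
    have hzero := zero_of_setIntegral_zero hV_open (hcontF.mono hVU₀)
      (fun x _ => Finset.sum_nonneg fun i _ => sq_nonneg _) hintF hc
    have hder : ∀ x ∈ V, fderiv ℝ (fun y => ∑ e, c e * φ e y) x = 0 := by
      intro x hx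
      apply clm_eq_zero
      intro i
      rw [hgD c x (hVU₀ hx) i]
      have h0 : (∑ e, c e * fderiv ℝ (φ e) x (Pi.single i 1)) ^ 2 = 0 :=
        (Finset.sum_eq_zero_iff_of_nonneg fun j _ => sq_nonneg _).1 (hzero x hx) i
          (Finset.mem_univ i)
      exact pow_eq_zero_iff two_ne_zero |>.1 h0
    obtain ⟨x₀, hx₀⟩ := hV_ne
    have hconst : ∀ x ∈ V, ∑ e, c e * φ e x = ∑ e, c e * φ e x₀ := fun x hx =>
      const_of_fderiv_zero_on hV_open hV_conn.isPreconnected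
        (fun z hz => hgdiff c z (hVU₀ hz)) hder hx hx₀
    have hce : ∀ e, c e = ∑ e, c e * φ e x₀ := fun e => hface_const c _ hconst e
    have hc0 : ((k:ℝ)+1) * (∑ e, c e * φ e x₀) = 0 := by
      calc ((k:ℝ)+1) * (∑ e, c e * φ e x₀)
          = ∑ _i : Fin (k+1), (∑ e, c e * φ e x₀) := by
            rw [Finset.sum_const, Finset.card_univ, Fintype.card_fin, nsmul_eq_mul]
            push_cast
            ring
        _ = ∑ i, c i := Finset.sum_congr rfl fun i _ => (hce i).symm
        _ = 0 := hcs
    have hg0 : (∑ e, c e * φ e x₀) = 0 := by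
      have hne : ((k:ℝ)+1) ≠ 0 := by positivity
      exact (mul_eq_zero.1 hc0).resolve_left hne
    funext e
    simpa [hg0] using hce e
  have hAposC : ∀ c : Fin (k+1) → ℝ, (∑ i, c i = 0) → (∑ i, c i ^ 2 = 1) →
      0 < rquad A c := by
    intro c h1 h2
    rcases lt_or_eq_of_le (hAnonneg c) with h | h
    · exact h
    · exfalso
      have hcz := hAzero c h1 h.symm
      rw [hcz] at h2
      simp at h2
  obtain ⟨αA, hαA, hcompA⟩ := quad_comp_core A (fun c => ∑ i, c i = 0)
    (isClosed_eq (continuous_finset_sum _ fun i _ => continuous_apply i) continuous_const)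
    (fun t c hc => by
      simp only [Pi.smul_apply, smul_eq_mul, ← Finset.mul_sum, hc, mul_zero])
    (sphere_nonempty2 (by omega)) hAposC
  obtain ⟨αB, hαB, hcompB⟩ := quad_comp_core B (fun _ => True)
    (by simpa using (isClosed_univ : IsClosed (Set.univ : Set (Fin (k+1) → ℝ))))
    (fun _ _ _ => trivial)
    (by
      obtain ⟨c, hc⟩ := sphere_nonempty1 (by omega : 0 < k+1)
      exact ⟨c, trivial, hc⟩)
    (fun c _ h2 => hBposdef c (by
      intro h0
      rw [h0] at h2
      simp at h2))
  refine ⟨Matrix.posSemidef_iff_dotProduct_mulVec.2 ⟨?_, ?_⟩, Matrix.posDef_iff_dotProduct_mulVec.2 ⟨?_, ?_⟩, ⟨αA, hαA, fun f => ?_⟩, ⟨αB, hαB, fun f => ?_⟩⟩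
  · show Matrix.conjTranspose (Matrix.of A) = Matrix.of A
    ext i j
    simp only [Matrix.conjTranspose_apply, Matrix.of_apply, star_trivial]
    exact hAsymm j i
  · intro x
    rw [star_trivial, dot_eq_rquad]
    exact hAnonneg x
  · show Matrix.conjTranspose (Matrix.of B) = Matrix.of B
    ext i j
    simp only [Matrix.conjTranspose_apply, Matrix.of_apply, star_trivial]
    exact hBsymm j i
  · intro x hx
    rw [star_trivial, dot_eq_rquad]
    exact hBposdef x hx
  · -- A bounds
    set a : Fin (k+1) → ℝ := fun i => (f i).re with ha
    set b : Fin (k+1) → ℝ := fun i => (f i).im with hb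
    set Pa : Fin (k+1) → ℝ := fun i => a i - (∑ j, a j) / ((k+1 : ℕ) : ℝ) with hPa
    set Pb : Fin (k+1) → ℝ := fun i => b i - (∑ j, b j) / ((k+1 : ℕ) : ℝ) with hPb
    have hk1 : ((k+1 : ℕ) : ℝ) ≠ 0 := by positivity
    have hsumPa : ∑ i, Pa i = 0 := by
      simp only [hPa]
      rw [Finset.sum_sub_distrib, Finset.sum_const, Finset.card_univ, Fintype.card_fin,
        nsmul_eq_mul]
      field_simp
      ring
    have hsumPb : ∑ i, Pb i = 0 := by
      simp only [hPb]
      rw [Finset.sum_sub_distrib, Finset.sum_const, Finset.card_univ, Fintype.card_fin,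
        nsmul_eq_mul]
      field_simp
      ring
    have hQa : rquad A a = rquad A Pa := by
      have he : a = fun i => Pa i + (∑ j, a j) / ((k+1 : ℕ) : ℝ) := by
        funext i
        simp [hPa]
      conv_lhs => rw [he]
      exact rquad_shift A hA1 hA2 Pa _
    have hQb : rquad A b = rquad A Pb := by
      have he : b = fun i => Pb i + (∑ j, b j) / ((k+1 : ℕ) : ℝ) := by
        funext i
        simp [hPb]
      conv_lhs => rw [he]
      exact rquad_shift A hA1 hA2 Pb _
    have hQF : quadFormC A f = rquad A a + rquad A b := quadFormC_eq A f
    have hnorm : ∑ i, ‖perpOne f i‖ ^ 2 = (∑ i, Pa i ^ 2) + ∑ i, Pb i ^ 2 :=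
      norm_perp_sum f
    obtain ⟨hlo1, hhi1⟩ := hcompA Pa hsumPa
    obtain ⟨hlo2, hhi2⟩ := hcompA Pb hsumPb
    constructor
    · calc 1/αA * (∑ i, ‖perpOne f i‖ ^ 2)
          = 1/αA * (∑ i, Pa i ^ 2) + 1/αA * (∑ i, Pb i ^ 2) := by rw [hnorm]; ring
        _ ≤ rquad A Pa + rquad A Pb := add_le_add hlo1 hlo2
        _ = quadFormC A f := by rw [hQF, hQa, hQb]
    · calc quadFormC A f = rquad A Pa + rquad A Pb := by rw [hQF, hQa, hQb]
        _ ≤ αA * (∑ i, Pa i ^ 2) + αA * (∑ i, Pb i ^ 2) := add_le_add hhi1 hhi2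
        _ = αA * (∑ i, ‖perpOne f i‖ ^ 2) := by rw [hnorm]; ring
  · -- B bounds
    set a : Fin (k+1) → ℝ := fun i => (f i).re with ha
    set b : Fin (k+1) → ℝ := fun i => (f i).im with hb
    have hQF : quadFormC B f = rquad B a + rquad B b := quadFormC_eq B f
    have hnorm : ∑ i, ‖f i‖ ^ 2 = (∑ i, a i ^ 2) + ∑ i, b i ^ 2 := norm_f_sum f
    obtain ⟨hlo1, hhi1⟩ := hcompB a trivial
    obtain ⟨hlo2, hhi2⟩ := hcompB b trivial
    constructor
    · calc 1/αB * (∑ i, ‖f i‖ ^ 2)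
          = 1/αB * (∑ i, a i ^ 2) + 1/αB * (∑ i, b i ^ 2) := by rw [hnorm]; ring
        _ ≤ rquad B a + rquad B b := add_le_add hlo1 hlo2
        _ = quadFormC B f := hQF.symm
    · calc quadFormC B f = rquad B a + rquad B b := hQF
        _ ≤ αB * (∑ i, a i ^ 2) + αB * (∑ i, b i ^ 2) := add_le_add hhi1 hhi2
        _ = αB * (∑ i, ‖f i‖ ^ 2) := by rw [hnorm]; ring
end

section
/- Let H₀ and H₁ be complex Hilbert spaces, let D₀ ⊆ H₀ and D₁ ⊆ H₁ be linear subspaces, and let R₀ : D₀ \ {0} → ℝ and R₁ : D₁ \ {0} → ℝ. Let S be the restriction to D₁ of a continuous linear map H₁ → H₀, with S(D₁) ⊆ D₀, and let φ : ℝ → ℝ ∪ {+∞} be nondecreasing with x ↦ exp(−φ(x)) continuous, such that R₀(S u) ≤ φ(R₁(u)) for every u ∈ D₁ with S u ≠ 0. Fix an integer m ≥ 1 and assume that the min–max value λ_m(R₁) is finite and that there exists μ > λ_m(R₁) such that R₁(v) ≥ μ for every nonzero v ∈ D₁ with S v = 0. Then λ_m(R₀) ≤ φ(λ_m(R₁))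 in the extended reals. -/
open Set

/-- The `m`-th min–max value of a Rayleigh-quotient-like functional `R` on a linear
subspace `D`: the infimum over `m`-dimensional subspaces `V ≤ D` of the supremum of `R`
over the nonzero vectors of `V`, computed in the extended reals. -/
noncomputable def minMaxVal {H : Type*} [AddCommGroup H] [Module ℂ H]
    (D : Submodule ℂ H) (R : H → ℝ) (m : ℕ) : EReal :=
  ⨅ (V : Submodule ℂ H) (_ : V ≤ D) (_ : Module.finrank ℂ V = m),
    ⨆ (v : H) (_ : v ∈ V) (_ : v ≠ 0), (R v : EReal)

/-- (Rubinstein–Schatzman comparison lemma, Lemma 7.1 of the paper.)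
If `S` maps the form domain `D₁` into `D₀` continuously, `R₀(Su) ≤ φ(R₁(u))` whenever
`Su ≠ 0` for a nondecreasing `φ : ℝ → ℝ ∪ {+∞}` with `exp(−φ)` continuous, the `m`-th
min–max value `λ_m(R₁)` is finite, and `R₁ ≥ μ > λ_m(R₁)` on the nonzero kernel of `S`
in `D₁`, then `λ_m(R₀) ≤ φ(λ_m(R₁))`. -/
theorem stmt11 {H₀ H₁ : Type*}
    [NormedAddCommGroup H₀] [InnerProductSpace ℂ H₀] [CompleteSpace H₀]
    [NormedAddCommGroup H₁] [InnerProductSpace ℂ H₁] [CompleteSpace H₁]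
    (D₀ : Submodule ℂ H₀) (D₁ : Submodule ℂ H₁)
    (R₀ : H₀ → ℝ) (R₁ : H₁ → ℝ)
    (S : H₁ →L[ℂ] H₀) (hS : ∀ u ∈ D₁, S u ∈ D₀)
    (φ : ℝ → EReal) (hφ_mono : Monotone φ) (hφ_ne_bot : ∀ x, φ x ≠ ⊥)
    (hφ_cont : Continuous fun x : ℝ =>
      if φ x = ⊤ then (0 : ℝ) else Real.exp (-(φ x).toReal))
    (hRφ : ∀ u ∈ D₁, S u ≠ 0 → (R₀ (S u) : EReal) ≤ φ (R₁ u))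
    (m : ℕ) (hm : 1 ≤ m)
    (hfin_top : minMaxVal D₁ R₁ m ≠ ⊤) (hfin_bot : minMaxVal D₁ R₁ m ≠ ⊥)
    (μ : ℝ) (hμ : minMaxVal D₁ R₁ m < (μ : EReal))
    (hker : ∀ v ∈ D₁, v ≠ 0 → S v = 0 → μ ≤ R₁ v) :
    minMaxVal D₀ R₀ m ≤ φ ((minMaxVal D₁ R₁ m).toReal) := by
  set x := (minMaxVal D₁ R₁ m).toReal with hxdef
  have hx1 : minMaxVal D₁ R₁ m = (x : EReal) := (EReal.coe_toReal hfin_top hfin_bot).symm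
  set g : ℝ → ℝ := fun t => if φ t = ⊤ then (0 : ℝ) else Real.exp (-(φ t).toReal) with hgdef
  -- Key step: for every ε > 0, minMaxVal D₀ R₀ m ≤ φ (x + ε)
  have key : ∀ ε : ℝ, 0 < ε → minMaxVal D₀ R₀ m ≤ φ (x + ε) := by
    intro ε hε
    set c := min μ (x + ε) with hc
    have hlt : minMaxVal D₁ R₁ m < (c : EReal) := by
      rw [hx1] at hμ ⊢
      rw [EReal.coe_lt_coe_iff] at hμ ⊢
      exact lt_min hμ (by linarith)
    obtain ⟨V, hVD, hVrank, hVsup⟩ : ∃ V : Submodule ℂ H₁, V ≤ D₁ ∧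
        Module.finrank ℂ V = m ∧
        (⨆ (v : H₁) (_ : v ∈ V) (_ : v ≠ 0), (R₁ v : EReal)) < (c : EReal) := by
      unfold minMaxVal at hlt
      rw [iInf_lt_iff] at hlt; obtain ⟨V, hV⟩ := hlt
      rw [iInf_lt_iff] at hV; obtain ⟨h1, hV⟩ := hV
      rw [iInf_lt_iff] at hV; obtain ⟨h2, hV⟩ := hV
      exact ⟨V, h1, h2, hV⟩
    have hRlt : ∀ v ∈ V, v ≠ 0 → R₁ v < c := by
      intro v hv hv0
      have hle : (R₁ v : EReal) ≤ ⨆ (v : H₁) (_ : v ∈ V) (_ : v ≠ 0), (R₁ v : EReal) := by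
        refine le_iSup_of_le v ?_
        refine le_iSup_of_le hv ?_
        exact le_iSup_of_le hv0 le_rfl
      have h1 : (R₁ v : EReal) < (c : EReal) := lt_of_le_of_lt hle hVsup
      exact_mod_cast h1
    have hinj : ∀ v ∈ V, S v = 0 → v = 0 := by
      intro v hv hSv
      by_contra hv0
      have h1 := hker v (hVD hv) hv0 hSv
      have h2 := hRlt v hv hv0
      have h3 : c ≤ μ := min_le_left _ _
      linarith
    set f : V →ₗ[ℂ] H₀ := (S : H₁ →ₗ[ℂ] H₀).comp V.subtype with hf
    have hfinj : Function.Injective f := by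
      rw [injective_iff_map_eq_zero]
      rintro ⟨a, ha⟩ hfa
      exact Subtype.ext (hinj a ha hfa)
    set W := V.map (S : H₁ →ₗ[ℂ] H₀) with hW
    have hWD : W ≤ D₀ := by rintro w ⟨v, hv, rfl⟩; exact hS v (hVD hv)
    have hWrank : Module.finrank ℂ W = m := by
      have h1 : LinearMap.range f = W := by
        rw [hf, LinearMap.range_comp, Submodule.range_subtype]
      rw [← h1, LinearMap.finrank_range_of_inj hfinj, hVrank]
    have hsup : (⨆ (w : H₀) (_ : w ∈ W) (_ : w ≠ 0), (R₀ w : EReal)) ≤ φ (x + ε) := by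
      refine iSup_le fun w => iSup_le fun hw => iSup_le fun hw0 => ?_
      obtain ⟨v, hv, rfl⟩ := hw
      have hv0 : v ≠ 0 := by rintro rfl; exact hw0 (map_zero _)
      have h1 : (R₀ (S v) : EReal) ≤ φ (R₁ v) := hRφ v (hVD hv) hw0
      have h2 : φ (R₁ v) ≤ φ (x + ε) :=
        hφ_mono (le_of_lt (lt_of_lt_of_le (hRlt v hv hv0) (min_le_right _ _)))
      exact h1.trans h2
    calc minMaxVal D₀ R₀ m
        ≤ ⨆ (w : H₀) (_ : w ∈ W) (_ : w ≠ 0), (R₀ w : EReal) :=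
          iInf_le_of_le W (iInf_le_of_le hWD (iInf_le_of_le hWrank le_rfl))
      _ ≤ φ (x + ε) := hsup
  by_cases htop : ∀ δ : ℝ, 0 < δ → φ (x + δ) = ⊤
  · -- then φ x = ⊤, and the conclusion is trivial
    have hgx : g x = 0 := by
      have hseq : Filter.Tendsto (fun n : ℕ => x + 1 / (n + 1)) Filter.atTop (nhds x) := by
        have : Filter.Tendsto (fun n : ℕ => 1 / ((n : ℝ) + 1)) Filter.atTop (nhds 0) :=
          tendsto_one_div_add_atTop_nhds_zero_nat
        have h2 := this.const_add x
        simpa using h2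
      have h3 : Filter.Tendsto (fun n : ℕ => g (x + 1 / (n + 1))) Filter.atTop (nhds (g x)) :=
        (hφ_cont.tendsto x).comp hseq
      have h4 : (fun n : ℕ => g (x + 1 / (n + 1))) = fun _ => (0 : ℝ) := by
        funext n
        have hp : (0 : ℝ) < 1 / ((n : ℝ) + 1) := by positivity
        simp only [hgdef]
        rw [if_pos (htop _ hp)]
      rw [h4] at h3
      exact (tendsto_nhds_unique tendsto_const_nhds h3).symm
    have hφx : φ x = ⊤ := by
      by_contra h
      simp only [hgdef] at hgx
      rw [if_neg h] at hgx
      exact (Real.exp_pos _).ne' hgx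
    rw [hφx]; exact le_top
  · push_neg at htop
    obtain ⟨δ₀, hδ₀, hδtop⟩ := htop
    -- φ is real-valued on [x, x + δ₀]
    have hreal : ∀ t : ℝ, x ≤ t → t ≤ x + δ₀ → φ t ≠ ⊤ := by
      intro t _ ht2 h
      exact hδtop (top_le_iff.mp (h ▸ hφ_mono ht2))
    set s : ℕ → ℝ := fun n => x + δ₀ / (n + 1) with hs
    have hspos : ∀ n : ℕ, 0 < δ₀ / ((n : ℝ) + 1) := fun n => by positivity
    have hsle : ∀ n : ℕ, s n ≤ x + δ₀ := by
      intro n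
      have : δ₀ / ((n : ℝ) + 1) ≤ δ₀ := by
        rw [div_le_iff₀ (by positivity)]
        nlinarith [hspos n, (Nat.cast_nonneg n : (0:ℝ) ≤ n)]
      simp only [hs]; linarith
    have hstend : Filter.Tendsto s Filter.atTop (nhds x) := by
      have h1 : Filter.Tendsto (fun n : ℕ => δ₀ / ((n : ℝ) + 1)) Filter.atTop (nhds 0) := by
        have := tendsto_one_div_add_atTop_nhds_zero_nat.const_mul δ₀
        simpa [div_eq_mul_inv, mul_comm, mul_assoc, one_div] using this
      have h2 := h1.const_add x
      simpa using h2
    -- g is exp(-(φ ·).toReal) on the relevant points, and positive there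
    have hgeq : ∀ t : ℝ, x ≤ t → t ≤ x + δ₀ → g t = Real.exp (-(φ t).toReal) := by
      intro t h1 h2
      simp [hgdef, hreal t h1 h2]
    have hgx_pos : g x = Real.exp (-(φ x).toReal) := hgeq x le_rfl (by linarith)
    have hgtend : Filter.Tendsto (fun n => g (s n)) Filter.atTop (nhds (g x)) :=
      (hφ_cont.tendsto x).comp hstend
    -- recover toReal ∘ φ via -log g
    have hlog : Filter.Tendsto (fun n => -Real.log (g (s n))) Filter.atTop
        (nhds (-Real.log (g x))) := by
      have hcont : ContinuousAt (fun y : ℝ => -Real.log y) (g x) := by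
        apply ContinuousAt.neg
        apply Real.continuousAt_log
        rw [hgx_pos]; exact (Real.exp_pos _).ne'
      exact hcont.tendsto.comp hgtend
    have hlogeq : ∀ n : ℕ, -Real.log (g (s n)) = (φ (s n)).toReal := by
      intro n
      have h1 : x ≤ s n := by simp only [hs]; linarith [hspos n]
      rw [hgeq (s n) h1 (hsle n), Real.log_exp, neg_neg]
    have hlogx : -Real.log (g x) = (φ x).toReal := by
      rw [hgx_pos, Real.log_exp, neg_neg]
    rw [funext hlogeq, hlogx] at hlog
    -- lift to EReal
    have hcoetend : Filter.Tendsto (fun n => φ (s n)) Filter.atTop (nhds (φ x)) := by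
      have h1 : Filter.Tendsto (fun n => (((φ (s n)).toReal : ℝ) : EReal)) Filter.atTop
          (nhds (((φ x).toReal : ℝ) : EReal)) :=
        (continuous_coe_real_ereal.tendsto _).comp hlog
      have h2 : ∀ n : ℕ, (((φ (s n)).toReal : ℝ) : EReal) = φ (s n) := by
        intro n
        refine EReal.coe_toReal ?_ (hφ_ne_bot _)
        exact hreal (s n) (by simp only [hs]; linarith [hspos n]) (hsle n)
      have h3 : (((φ x).toReal : ℝ) : EReal) = φ x :=
        EReal.coe_toReal (hreal x le_rfl (by linarith)) (hφ_ne_bot _)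
      rw [funext h2, h3] at h1
      exact h1
    exact ge_of_tendsto' hcoetend fun n => key _ (hspos n)
end

section
/- Let N ≥ 1 and k ≥ 1 be integers, and define the box Ω := ∏_{i=0}^{N−1} [0, k^{i/N}] ⊆ ℝ^N. Let σ : ℝ^N → ℝ^N be the linear isometry given by cyclically permuting the coordinates, (σx)_j = x_{(j+1) mod N}, and for m = 0,…,k−1 define the similarity T_m : ℝ^N → ℝ^N by T_m(x) := σ(k^{−1/N}·x) + m·k^{−1/N}·e_{N−1}, where e_{N−1} is the last standard basis vector. Then Ω = ⋃_{m=0}^{k−1} T_m(Ω), and the sets T_m(Ω) (m = 0,…,k−1) have pairwise disjoint interiors; in particular, k congruent copies of the scaled box k^{−1/N}·Ω exactly cover Ω. -/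
open Set

/-- The box `Ω = ∏_{i=0}^{N−1} [0, k^{i/N}] ⊆ ℝ^N` with `N = n+1`. -/
noncomputable def tileBox (n k : ℕ) : Set (Fin (n + 1) → ℝ) :=
  univ.pi fun j : Fin (n + 1) => Icc (0 : ℝ) ((k : ℝ) ^ (((j : ℕ) : ℝ) / ((n : ℝ) + 1)))

/-- The similarity `T_m(x) = σ(k^{−1/N}·x) + m·k^{−1/N}·e_{N−1}`, where `σ` cyclically
permutes the coordinates `(σx)_j = x_{(j+1) mod N}` and `e_{N−1}` is the last standard
basis vector (`N = n+1`). -/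
noncomputable def tileMap (n k : ℕ) (m : Fin k) (x : Fin (n + 1) → ℝ) : Fin (n + 1) → ℝ :=
  fun j => (k : ℝ) ^ (-(1 : ℝ) / ((n : ℝ) + 1)) * x (j + 1) +
    (if j = Fin.last n then ((m : ℕ) : ℝ) * (k : ℝ) ^ (-(1 : ℝ) / ((n : ℝ) + 1)) else 0)

/-- The scaling factor `c = k^{-1/N}`. -/
noncomputable def tileC (n k : ℕ) : ℝ := (k : ℝ) ^ (-(1 : ℝ) / ((n : ℝ) + 1))

/-- The slab `∏_{j<N-1} [0, k^{j/N}] × [m c, (m+1) c]`. -/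
noncomputable def tileSlab (n k : ℕ) (m : Fin k) : Set (Fin (n + 1) → ℝ) :=
  univ.pi fun j : Fin (n + 1) =>
    if j = Fin.last n then Icc (((m : ℕ) : ℝ) * tileC n k) ((((m : ℕ) : ℝ) + 1) * tileC n k)
    else Icc (0 : ℝ) ((k : ℝ) ^ (((j : ℕ) : ℝ) / ((n : ℝ) + 1)))

lemma tileC_pos (n k : ℕ) (hk : 1 ≤ k) : 0 < tileC n k :=
  Real.rpow_pos_of_pos (by exact_mod_cast hk) _

lemma kpos (k : ℕ) (hk : 1 ≤ k) : (0 : ℝ) < (k : ℝ) := by exact_mod_cast hk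

lemma tileC_mul (n k : ℕ) (hk : 1 ≤ k) (a : ℝ) :
    tileC n k * (k : ℝ) ^ ((a + 1) / ((n : ℝ) + 1)) = (k : ℝ) ^ (a / ((n : ℝ) + 1)) := by
  rw [tileC, ← Real.rpow_add (kpos k hk)]
  congr 1
  have : ((n : ℝ) + 1) ≠ 0 := by positivity
  field_simp
  ring

lemma k_mul_tileC (n k : ℕ) (hk : 1 ≤ k) :
    (k : ℝ) * tileC n k = (k : ℝ) ^ (((n : ℕ) : ℝ) / ((n : ℝ) + 1)) := by
  have h := tileC_mul n k hk (n : ℝ)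
  have hn : ((n : ℝ) + 1) / ((n : ℝ) + 1) = 1 := by
    field_simp
  rw [hn, Real.rpow_one] at h
  rw [← h]; ring

lemma tileMap_image (n k : ℕ) (hk : 1 ≤ k) (m : Fin k) :
    tileMap n k m '' tileBox n k = tileSlab n k m := by
  have hc := tileC_pos n k hk
  have hkR := kpos k hk
  have hcc : (k : ℝ) ^ (-(1 : ℝ) / ((n : ℝ) + 1)) = tileC n k := rfl
  ext y
  simp only [tileSlab, tileBox, mem_image, mem_pi, mem_univ, forall_true_left, mem_Icc]
  constructor
  · rintro ⟨x, hx, rfl⟩ j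
    simp only [tileMap, hcc]
    by_cases hj : j = Fin.last n
    · subst hj
      rw [if_pos rfl, if_pos rfl]
      have h0 : Fin.last n + 1 = 0 := Fin.last_add_one n
      rw [h0]
      have hx0 := hx 0
      simp only [Fin.val_zero, Nat.cast_zero, zero_div, Real.rpow_zero] at hx0
      simp only [mem_Icc]
      constructor
      · nlinarith [hx0.1, hc]
      · nlinarith [hx0.2, hc]
    · rw [if_neg hj, if_neg hj, add_zero]
      have hval : ((j + 1 : Fin (n + 1)) : ℕ) = (j : ℕ) + 1 := by
        rw [Fin.val_add_one, if_neg hj]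
      have hx1 := hx (j + 1)
      rw [hval] at hx1
      have key := tileC_mul n k hk ((j : ℕ) : ℝ)
      push_cast at hx1
      simp only [mem_Icc]
      constructor
      · exact mul_nonneg hc.le hx1.1
      · calc tileC n k * x (j + 1)
            ≤ tileC n k * (k : ℝ) ^ ((((j : ℕ) : ℝ) + 1) / ((n : ℝ) + 1)) :=
              mul_le_mul_of_nonneg_left hx1.2 hc.le
          _ = (k : ℝ) ^ (((j : ℕ) : ℝ) / ((n : ℝ) + 1)) := key
  · intro hy
    have h01 : (0 : Fin (n + 1)) - 1 = Fin.last n := by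
      have := Fin.last_add_one n
      rw [← this]; exact add_sub_cancel_right _ _
    have hsub : ∀ i : Fin (n + 1), i - 1 = Fin.last n ↔ i = 0 := by
      intro i
      constructor
      · intro h
        have h2 := congrArg (· + 1) h
        simpa [sub_add_cancel, Fin.last_add_one] using h2
      · rintro rfl; exact h01
    have hlast := hy (Fin.last n)
    rw [if_pos rfl] at hlast
    refine ⟨fun i => (tileC n k)⁻¹ * (y (i - 1) -
      if i - 1 = Fin.last n then ((m : ℕ) : ℝ) * tileC n k else 0), ?_, ?_⟩
    · intro i
      dsimp only
      by_cases hi : i = 0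
      · subst hi
        rw [if_pos h01, h01]
        simp only [Fin.val_zero, Nat.cast_zero, zero_div, Real.rpow_zero]
        constructor
        · have : 0 ≤ y (Fin.last n) - ((m : ℕ) : ℝ) * tileC n k := by
            linarith [hlast.1]
          positivity
        · have h2 : y (Fin.last n) - ((m : ℕ) : ℝ) * tileC n k ≤ tileC n k := by
            linarith [hlast.2]
          calc (tileC n k)⁻¹ * (y (Fin.last n) - ((m : ℕ) : ℝ) * tileC n k)
              ≤ (tileC n k)⁻¹ * tileC n k :=
                mul_le_mul_of_nonneg_left h2 (by positivity)
            _ = 1 := inv_mul_cancel₀ hc.ne'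
      · rw [if_neg (by rw [hsub]; exact hi), sub_zero]
        have hyi := hy (i - 1)
        rw [if_neg (by rw [hsub]; exact hi)] at hyi
        have hval : ((i - 1 : Fin (n + 1)) : ℕ) = (i : ℕ) - 1 := by
          rw [Fin.coe_sub_one, if_neg hi]
        have hige : 1 ≤ (i : ℕ) := Nat.one_le_iff_ne_zero.mpr (fun h => hi (Fin.ext h))
        have hcast : (((i : ℕ) - 1 : ℕ) : ℝ) = ((i : ℕ) : ℝ) - 1 := by
          push_cast [hige]; ring
        rw [hval, hcast] at hyi
        constructor
        · exact mul_nonneg (by positivity) hyi.1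
        · have key := tileC_mul n k hk (((i : ℕ) : ℝ) - 1)
          rw [sub_add_cancel] at key
          have hkey : (tileC n k)⁻¹ * (k : ℝ) ^ ((((i : ℕ) : ℝ) - 1) / ((n : ℝ) + 1)) =
              (k : ℝ) ^ (((i : ℕ) : ℝ) / ((n : ℝ) + 1)) := by
            rw [← key]
            field_simp
          calc (tileC n k)⁻¹ * y (i - 1)
              ≤ (tileC n k)⁻¹ * (k : ℝ) ^ ((((i : ℕ) : ℝ) - 1) / ((n : ℝ) + 1)) :=
                mul_le_mul_of_nonneg_left hyi.2 (by positivity)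
            _ = (k : ℝ) ^ (((i : ℕ) : ℝ) / ((n : ℝ) + 1)) := hkey
    · funext j
      have hj1 : j + 1 - 1 = j := add_sub_cancel_right j 1
      simp only [tileMap, hcc, hj1]
      by_cases hj : j = Fin.last n
      · rw [if_pos hj]
        field_simp
        ring
      · rw [if_neg hj]
        field_simp
        ring

lemma iUnion_tileSlab (n k : ℕ) (hk : 1 ≤ k) :
    (⋃ m : Fin k, tileSlab n k m) = tileBox n k := by
  have hc := tileC_pos n k hk
  ext y
  simp only [mem_iUnion, tileSlab, tileBox, mem_pi, mem_univ, forall_true_left, mem_Icc]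
  constructor
  · rintro ⟨m, hm⟩ j
    by_cases hj : j = Fin.last n
    · have hmj := hm j
      rw [if_pos hj] at hmj
      subst hj
      simp only [Fin.val_last, mem_Icc] at hmj ⊢
      have hmk : ((m : ℕ) : ℝ) + 1 ≤ (k : ℝ) := by exact_mod_cast m.2
      constructor
      · nlinarith [hmj.1, hc, (m : ℕ).cast_nonneg (α := ℝ)]
      · have h2 : (((m : ℕ) : ℝ) + 1) * tileC n k ≤ (k : ℝ) * tileC n k :=
          mul_le_mul_of_nonneg_right hmk hc.le
        rw [k_mul_tileC n k hk] at h2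
        linarith [hmj.2]
    · have hmj := hm j
      rwa [if_neg hj, mem_Icc] at hmj
  · intro hy
    set c := tileC n k with hcdef
    set t := y (Fin.last n) with htdef
    have ht := hy (Fin.last n)
    simp only [Fin.val_last] at ht
    have htk : t ≤ (k : ℝ) * c := by
      rw [hcdef, k_mul_tileC n k hk]; exact ht.2
    have ht0 : 0 ≤ t := ht.1
    have main : ∃ m : Fin k, ((m : ℕ) : ℝ) * c ≤ t ∧ t ≤ (((m : ℕ) : ℝ) + 1) * c := by
      by_cases hq : ⌊t / c⌋₊ < k
      · refine ⟨⟨⌊t / c⌋₊, hq⟩, ?_, ?_⟩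
        · have h1 : (⌊t / c⌋₊ : ℝ) ≤ t / c := Nat.floor_le (by positivity)
          calc ((⟨⌊t / c⌋₊, hq⟩ : Fin k) : ℕ) * c = (⌊t / c⌋₊ : ℝ) * c := by norm_num
            _ ≤ (t / c) * c := mul_le_mul_of_nonneg_right h1 hc.le
            _ = t := by field_simp
        · have h2 : t / c < (⌊t / c⌋₊ : ℝ) + 1 := Nat.lt_floor_add_one _
          have h3 := mul_lt_mul_of_pos_right h2 hc
          rw [div_mul_cancel₀ _ hc.ne'] at h3
          calc t ≤ ((⌊t / c⌋₊ : ℝ) + 1) * c := h3.le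
            _ = (((⟨⌊t / c⌋₊, hq⟩ : Fin k) : ℕ) : ℝ) * c + c := by push_cast; ring
            _ = ((((⟨⌊t / c⌋₊, hq⟩ : Fin k) : ℕ) : ℝ) + 1) * c := by ring
      · push_neg at hq
        have hteq : t = (k : ℝ) * c := by
          have h1 : (k : ℝ) ≤ (⌊t / c⌋₊ : ℝ) := by exact_mod_cast hq
          have h2 : (⌊t / c⌋₊ : ℝ) ≤ t / c := Nat.floor_le (by positivity)
          have h3 : (k : ℝ) * c ≤ t := by
            calc (k : ℝ) * c ≤ (t / c) * c :=
                mul_le_mul_of_nonneg_right (h1.trans h2) hc.le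
              _ = t := by field_simp
          linarith
        refine ⟨⟨k - 1, Nat.sub_lt hk one_pos⟩, ?_, ?_⟩
        · have hkcast : (((k - 1 : ℕ) : ℕ) : ℝ) = (k : ℝ) - 1 := by
            push_cast [hk]; ring
          calc (((⟨k - 1, Nat.sub_lt hk one_pos⟩ : Fin k) : ℕ) : ℝ) * c
              = ((k : ℝ) - 1) * c := by rw [show ((⟨k - 1, Nat.sub_lt hk one_pos⟩ :
                  Fin k) : ℕ) = k - 1 from rfl, hkcast]
            _ ≤ (k : ℝ) * c := by nlinarith
            _ = t := hteq.symm
        · have hkcast : (((k - 1 : ℕ) : ℕ) : ℝ) = (k : ℝ) - 1 := by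
            push_cast [hk]; ring
          rw [show ((⟨k - 1, Nat.sub_lt hk one_pos⟩ : Fin k) : ℕ) = k - 1 from rfl,
            hkcast, hteq]
          nlinarith
    obtain ⟨m, hm1, hm2⟩ := main
    refine ⟨m, fun j => ?_⟩
    by_cases hj : j = Fin.last n
    · rw [if_pos hj, hj, mem_Icc]
      exact ⟨hm1, hm2⟩
    · rw [if_neg hj, mem_Icc]
      exact hy j

/-- (Tiling claim of Definition 2.2.) The box `Ω` with side lengths
`(1, k^{1/N}, …, k^{(N−1)/N})` is exactly covered by the `k` congruent copies
`T_m(Ω)` (`m = 0,…,k−1`) of the scaled box `k^{−1/N}·Ω`, and these copies have pairwise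
disjoint interiors. -/
theorem stmt14 (n k : ℕ) (hk : 1 ≤ k) :
    (⋃ m : Fin k, tileMap n k m '' tileBox n k) = tileBox n k ∧
      ∀ m m' : Fin k, m ≠ m' →
        Disjoint (interior (tileMap n k m '' tileBox n k))
          (interior (tileMap n k m' '' tileBox n k)) := by
  have hc := tileC_pos n k hk
  constructor
  · have he : (⋃ m : Fin k, tileMap n k m '' tileBox n k) = ⋃ m : Fin k, tileSlab n k m :=
      iUnion_congr fun m => tileMap_image n k hk m
    rw [he, iUnion_tileSlab n k hk]
  · intro m m' hmm
    rw [tileMap_image n k hk, tileMap_image n k hk]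
    -- interior of slab
    have hint : ∀ (mm : Fin k), interior (tileSlab n k mm) ⊆
        {z : Fin (n+1) → ℝ | z (Fin.last n) ∈
          Ioo (((mm : ℕ) : ℝ) * tileC n k) ((((mm : ℕ) : ℝ) + 1) * tileC n k)} := by
      intro mm z hz
      rw [tileSlab, interior_pi_set finite_univ] at hz
      have h3 := hz (Fin.last n) (mem_univ _)
      dsimp only at h3
      rw [if_pos rfl, interior_Icc] at h3
      exact h3
    rw [Set.disjoint_left]
    intro z hz hz'
    have h1 := hint m hz
    have h2 := hint m' hz'
    simp only [mem_setOf_eq, mem_Ioo] at h1 h2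
    rcases lt_or_gt_of_ne (fun h : (m : ℕ) = (m' : ℕ) => hmm (Fin.ext h)) with h | h
    · have : ((m : ℕ) : ℝ) + 1 ≤ ((m' : ℕ) : ℝ) := by exact_mod_cast h
      nlinarith [h1.2, h2.1, hc]
    · have : ((m' : ℕ) : ℝ) + 1 ≤ ((m : ℕ) : ℝ) := by exact_mod_cast h
      nlinarith [h2.2, h1.1, hc]
end
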